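/- arXiv:1001.3556 — 2 statements merged into one kernel-verified Lean document; each statement's English description precedes it below -/
import Mathlib

section
/- For t > 0, the function Θ(t) = ∑_{n=1}^∞ 1/(e^{nt} - 1) satisfies Θ(t) = -ln(t)/t + γ/t + 1/4 + O(t) as t → 0⁺, where γ is Euler's constant. -/
open Filter Asymptotics MeasureTheory intervalIntegral Set Real

namespace ThetaAux


/-- `A x = ∫_0^1 (1-s) e^{-sx} ds = (e^{-x}-1+x)/x²`, smooth extension of numerator. -/
noncomputable def A (x : ℝ) : ℝ := ∫ s in (0:ℝ)..1, (1 - s) * Real.exp (-(s * x))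

/-- `B x = ∫_0^1 e^{sx} ds = (e^x-1)/x`, smooth extension. -/
noncomputable def B (x : ℝ) : ℝ := ∫ s in (0:ℝ)..1, Real.exp (s * x)

noncomputable def H (x : ℝ) : ℝ := A x / B x

lemma B_eq {x : ℝ} (hx : x ≠ 0) : B x = (Real.exp x - 1) / x := by
  have : ∀ s ∈ Set.uIcc (0:ℝ) 1, HasDerivAt (fun s => Real.exp (s * x) / x) (Real.exp (s * x)) s := by
    intro s _
    have h1 : HasDerivAt (fun s : ℝ => s * x) x s := hasDerivAt_mul_const x
    have h2 := (h1.exp).div_const x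
    refine h2.congr_deriv ?_
    field_simp
  rw [B, intervalIntegral.integral_eq_sub_of_hasDerivAt this (Continuous.intervalIntegrable (by fun_prop) _ _)]
  simp [Real.exp_zero]
  field_simp

lemma A_eq {x : ℝ} (hx : x ≠ 0) : A x = (Real.exp (-x) - 1 + x) / x ^ 2 := by
  have : ∀ s ∈ Set.uIcc (0:ℝ) 1, HasDerivAt
      (fun s => Real.exp (-(s * x)) * ((1 - x) / x ^ 2 + s / x))
      ((1 - s) * Real.exp (-(s * x))) s := by
    intro s _
    have h1 : HasDerivAt (fun s : ℝ => -(s * x)) (-x) s := (hasDerivAt_mul_const x).neg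
    have h2 : HasDerivAt (fun s : ℝ => (1 - x) / x ^ 2 + s / x) (1 / x) s := by
      simpa using ((hasDerivAt_id s).div_const x).const_add ((1 - x) / x ^ 2)
    have := (h1.exp).mul h2
    refine this.congr_deriv ?_
    field_simp
    ring
  rw [A, intervalIntegral.integral_eq_sub_of_hasDerivAt this (Continuous.intervalIntegrable (by fun_prop) _ _)]
  simp [Real.exp_zero]
  field_simp
  ring

lemma B_pos (x : ℝ) : 0 < B x :=
  intervalIntegral.intervalIntegral_pos_of_pos (f := fun s => Real.exp (s * x))
    (Continuous.intervalIntegrable (by fun_prop) _ _) (fun s => Real.exp_pos _) one_pos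

lemma A_zero : A 0 = 1 / 2 := by
  simp only [A, mul_zero, neg_zero, Real.exp_zero, mul_one]
  rw [intervalIntegral.integral_sub intervalIntegrable_const
    (intervalIntegral.intervalIntegrable_id), integral_id, intervalIntegral.integral_const]
  norm_num

lemma B_zero : B 0 = 1 := by simp [B]

lemma H_zero : H 0 = 1 / 2 := by simp [H, A_zero, B_zero]

lemma H_eq {x : ℝ} (hx : 0 < x) :
    H x = 1 / (Real.exp x - 1) - Real.exp (-x) / x := by
  have hx0 : x ≠ 0 := hx.ne'
  have he : Real.exp x - 1 ≠ 0 := by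
    have := Real.exp_lt_exp.2 (show (0:ℝ) < x from hx)
    simp only [Real.exp_zero] at this; linarith
  rw [H, A_eq hx0, B_eq hx0, Real.exp_neg]
  have hepos := Real.exp_pos x
  field_simp
  ring



/-- parametric integral -/
noncomputable def P (p : ℝ → ℝ) (x : ℝ) : ℝ := ∫ s in (0:ℝ)..1, p s * Real.exp (s * x)

lemma continuous_P (p : ℝ → ℝ) (hp : Continuous p) : Continuous (P p) := by
  apply continuous_parametric_intervalIntegral_of_continuous' (f := fun x s => p s * Real.exp (s * x))
  fun_prop

lemma hasDerivAt_P (p : ℝ → ℝ) (hp : Continuous p) (x₀ : ℝ) :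
    HasDerivAt (P p) (P (fun s => s * p s) x₀) x₀ := by
  obtain ⟨Cp, hCp⟩ : ∃ C, ∀ s ∈ Set.Icc (0:ℝ) 1, |p s| ≤ C :=
    (isCompact_Icc).exists_bound_of_continuousOn hp.continuousOn |>.imp
      (fun C hC s hs => by simpa using hC s hs)
  have key := intervalIntegral.hasDerivAt_integral_of_dominated_loc_of_deriv_le
    (F := fun x s => p s * Real.exp (s * x)) (F' := fun x s => s * p s * Real.exp (s * x))
    (x₀ := x₀) (a := (0:ℝ)) (b := 1) (μ := MeasureTheory.volume)
    (bound := fun _ => Cp * Real.exp (|x₀| + 1)) (Metric.ball_mem_nhds x₀ one_pos)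
    (Eventually.of_forall fun x => (Continuous.aestronglyMeasurable (by fun_prop)).restrict)
    ((Continuous.intervalIntegrable (by fun_prop) _ _))
    ((Continuous.aestronglyMeasurable (by fun_prop)).restrict)
    ?_ (intervalIntegrable_const) ?_
  · exact key.2
  · refine Eventually.of_forall fun s hs x hx => ?_
    rw [Set.uIoc_of_le (by norm_num : (0:ℝ) ≤ 1)] at hs
    have hs01 : s ∈ Set.Icc (0:ℝ) 1 := ⟨hs.1.le, hs.2⟩
    have h1 : |s * p s| ≤ Cp := by
      have := hCp s hs01
      have : |s * p s| = |s| * |p s| := abs_mul _ _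
      rw [this, abs_of_nonneg hs01.1]
      calc s * |p s| ≤ 1 * |p s| := by
            apply mul_le_mul_of_nonneg_right hs01.2 (abs_nonneg _)
        _ = |p s| := one_mul _
        _ ≤ Cp := hCp s hs01
    have h2 : Real.exp (s * x) ≤ Real.exp (|x₀| + 1) := by
      apply Real.exp_le_exp.2
      have hxx : |x| ≤ |x₀| + 1 := by
        have := mem_ball_iff_norm.1 hx
        calc |x| = |x₀ + (x - x₀)| := by ring_nf
          _ ≤ |x₀| + |x - x₀| := abs_add_le _ _
          _ ≤ |x₀| + 1 := by
              have : |x - x₀| ≤ 1 := by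
                simpa [Real.norm_eq_abs] using this.le
              linarith
      calc s * x ≤ |s * x| := le_abs_self _
        _ = |s| * |x| := abs_mul _ _
        _ ≤ 1 * (|x₀| + 1) := by
            apply mul_le_mul (by rw [abs_of_nonneg hs01.1]; exact hs01.2) hxx (abs_nonneg _) one_pos.le
        _ = |x₀| + 1 := one_mul _
    calc ‖s * p s * Real.exp (s * x)‖ = |s * p s| * Real.exp (s * x) := by
          rw [norm_mul, Real.norm_eq_abs, Real.norm_eq_abs, Real.abs_exp]
      _ ≤ Cp * Real.exp (|x₀| + 1) := by
          apply mul_le_mul h1 h2 (Real.exp_pos _).le ((abs_nonneg _).trans h1)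
  · refine Eventually.of_forall fun s _ x _ => ?_
    have h1 : HasDerivAt (fun x : ℝ => s * x) s x := by
      simpa using (hasDerivAt_id x).const_mul s
    have := (h1.exp).const_mul (p s)
    refine this.congr_deriv ?_
    ring

lemma contDiff_P (p : ℝ → ℝ) (hp : Continuous p) : ContDiff ℝ 2 (P p) := by
  have hd : ∀ (q : ℝ → ℝ), Continuous q → deriv (P q) = P (fun s => s * q s) := by
    intro q hq
    funext x
    exact (hasDerivAt_P q hq x).deriv
  have : (2 : WithTop ℕ∞) = 1 + 1 := by norm_num
  rw [this, contDiff_succ_iff_deriv]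
  refine ⟨fun x => (hasDerivAt_P p hp x).differentiableAt, by simp, ?_⟩
  rw [hd p hp, show (1 : WithTop ℕ∞) = 0 + 1 by norm_num, contDiff_succ_iff_deriv]
  refine ⟨fun x => (hasDerivAt_P _ (by fun_prop) x).differentiableAt, by simp, ?_⟩
  rw [hd _ (by fun_prop), contDiff_zero]
  exact continuous_P _ (by fun_prop)



noncomputable def fg (y : ℝ) : ℝ := 1 / (Real.exp y - 1) - Real.exp (-y) / y

noncomputable def fg1 (y : ℝ) : ℝ :=
  -Real.exp y / (Real.exp y - 1) ^ 2 + Real.exp (-y) / y + Real.exp (-y) / y ^ 2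

noncomputable def fg2 (y : ℝ) : ℝ :=
  Real.exp y * (Real.exp y + 1) / (Real.exp y - 1) ^ 3
    - Real.exp (-y) * (1 / y + 2 / y ^ 2 + 2 / y ^ 3)

lemma exp_sub_one_pos {x : ℝ} (hx : 0 < x) : 0 < Real.exp x - 1 := by
  have : (1:ℝ) = Real.exp 0 := Real.exp_zero.symm
  rw [this]
  simpa using Real.exp_lt_exp.2 hx

lemma hasDerivAt_fg {x : ℝ} (hx : 0 < x) : HasDerivAt fg (fg1 x) x := by
  have hne := (exp_sub_one_pos hx).ne'
  have h1 : HasDerivAt (fun y : ℝ => Real.exp y - 1) (Real.exp x) x :=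
    (Real.hasDerivAt_exp x).sub_const 1
  have h2 : HasDerivAt (fun y : ℝ => 1 / (Real.exp y - 1))
      (-(Real.exp x) / (Real.exp x - 1) ^ 2) x := by
    simpa [Pi.div_def] using ((hasDerivAt_const x (1:ℝ)).div h1 hne)
  have h3 : HasDerivAt (fun y : ℝ => Real.exp (-y)) (-Real.exp (-x)) x := by
    simpa using ((hasDerivAt_neg x).exp)
  have h4 : HasDerivAt (fun y : ℝ => Real.exp (-y) / y)
      ((-Real.exp (-x) * x - Real.exp (-x)) / x ^ 2) x := by
    simpa [Pi.div_def] using h3.div (hasDerivAt_id x) hx.ne'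
  have := h2.sub h4
  refine this.congr_deriv ?_
  unfold fg1
  field_simp
  ring

lemma hasDerivAt_fg1 {x : ℝ} (hx : 0 < x) : HasDerivAt fg1 (fg2 x) x := by
  have hne := (exp_sub_one_pos hx).ne'
  have h1 : HasDerivAt (fun y : ℝ => (Real.exp y - 1) ^ 2)
      (2 * (Real.exp x - 1) * Real.exp x) x := by
    simpa [Pi.pow_def] using ((Real.hasDerivAt_exp x).sub_const 1).pow 2
  have h2 : HasDerivAt (fun y : ℝ => -Real.exp y / (Real.exp y - 1) ^ 2)
      ((-Real.exp x * (Real.exp x - 1) ^ 2 - (-Real.exp x) * (2 * (Real.exp x - 1) * Real.exp x))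
        / ((Real.exp x - 1) ^ 2) ^ 2) x :=
    ((Real.hasDerivAt_exp x).neg).div h1 (pow_ne_zero 2 hne)
  have h3 : HasDerivAt (fun y : ℝ => Real.exp (-y)) (-Real.exp (-x)) x := by
    simpa using ((hasDerivAt_neg x).exp)
  have h4 : HasDerivAt (fun y : ℝ => Real.exp (-y) / y)
      ((-Real.exp (-x) * x - Real.exp (-x)) / x ^ 2) x := by
    simpa [Pi.div_def] using h3.div (hasDerivAt_id x) hx.ne'
  have h5 : HasDerivAt (fun y : ℝ => y ^ 2) (2 * x) x := by
    simpa [Pi.pow_def] using (hasDerivAt_id x).pow 2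
  have h6 : HasDerivAt (fun y : ℝ => Real.exp (-y) / y ^ 2)
      ((-Real.exp (-x) * x ^ 2 - Real.exp (-x) * (2 * x)) / (x ^ 2) ^ 2) x :=
    h3.div h5 (pow_ne_zero 2 hx.ne')
  have := (h2.add h4).add h6
  refine this.congr_deriv ?_
  unfold fg2
  have hE := Real.exp_ne_zero x
  field_simp
  ring

lemma fg2_bound {x : ℝ} (hx : 1 ≤ x) : |fg2 x| ≤ 21 * Real.exp (-x) := by
  have hx0 : (0:ℝ) < x := by linarith
  set E := Real.exp x with hE
  have hE2 : (2:ℝ) ≤ E := by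
    calc (2:ℝ) = 1 + 1 := by norm_num
      _ ≤ Real.exp 1 := by simpa using Real.add_one_le_exp 1
      _ ≤ E := Real.exp_le_exp.2 hx
  have hEpos : (0:ℝ) < E := Real.exp_pos x
  have hexpneg : Real.exp (-x) = 1 / E := by rw [Real.exp_neg]; rw [one_div]
  have hEm1 : E / 2 ≤ E - 1 := by linarith
  have hEm1pos : (0:ℝ) < E - 1 := by linarith
  have hterm1 : E * (E + 1) / (E - 1) ^ 3 ≤ 16 / E := by
    rw [div_le_div_iff₀ (by positivity) hEpos]
    nlinarith [sq_nonneg (E - 2), sq_nonneg E, mul_pos hEpos hEpos]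
  have hterm1pos : 0 ≤ E * (E + 1) / (E - 1) ^ 3 := by positivity
  have hterm2 : Real.exp (-x) * (1 / x + 2 / x ^ 2 + 2 / x ^ 3) ≤ 5 * Real.exp (-x) := by
    have h1 : 1 / x ≤ 1 := by rw [div_le_one hx0]; exact hx
    have h2 : 2 / x ^ 2 ≤ 2 := by
      rw [div_le_iff₀ (by positivity)]; nlinarith
    have h3 : 2 / x ^ 3 ≤ 2 := by
      rw [div_le_iff₀ (by positivity)]; nlinarith
    have := Real.exp_pos (-x)
    nlinarith
  have hterm2pos : 0 ≤ Real.exp (-x) * (1 / x + 2 / x ^ 2 + 2 / x ^ 3) := by positivity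
  rw [fg2, abs_sub_comm]
  rw [abs_sub_le_iff]
  constructor
  · have : (16:ℝ) / E = 16 * Real.exp (-x) := by rw [hexpneg]; ring
    nlinarith [Real.exp_pos (-x)]
  · have : (16:ℝ) / E = 16 * Real.exp (-x) := by rw [hexpneg]; ring
    nlinarith [Real.exp_pos (-x)]

lemma fg_bound {x : ℝ} (hx : 1 ≤ x) : |fg x| ≤ 3 * Real.exp (-x) := by
  have hx0 : (0:ℝ) < x := by linarith
  set E := Real.exp x with hE
  have hE2 : (2:ℝ) ≤ E := by
    calc (2:ℝ) = 1 + 1 := by norm_num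
      _ ≤ Real.exp 1 := by simpa using Real.add_one_le_exp 1
      _ ≤ E := Real.exp_le_exp.2 hx
  have hEm1pos : (0:ℝ) < E - 1 := by linarith
  have hexpneg : Real.exp (-x) = 1 / E := by rw [Real.exp_neg, one_div]
  have h1 : 1 / (E - 1) ≤ 2 * Real.exp (-x) := by
    rw [hexpneg, div_le_iff₀ hEm1pos]
    have : 2 * (1 / E) * (E - 1) = 2 - 2 / E := by field_simp
    rw [this]
    have : 2 / E ≤ 1 := by rw [div_le_one (by linarith)]; linarith
    linarith
  have h1pos : 0 < 1 / (E - 1) := by positivity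
  have h2 : Real.exp (-x) / x ≤ Real.exp (-x) := by
    rw [div_le_iff₀ hx0]
    nlinarith [Real.exp_pos (-x)]
  have h2pos : 0 < Real.exp (-x) / x := by positivity
  rw [fg, abs_sub_le_iff]
  constructor <;> nlinarith [Real.exp_pos (-x)]


end ThetaAux

namespace ThetaAux



lemma A_eq_P : A = fun x => P (fun s => 1 - s) (-x) := by
  funext x
  rw [A, P]
  apply intervalIntegral.integral_congr
  intro s _
  ring_nf

lemma B_eq_P : B = P (fun _ => 1) := by
  funext x
  rw [B, P]
  apply intervalIntegral.integral_congr
  intro s _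
  simp

lemma contDiff_A : ContDiff ℝ 2 A := by
  rw [A_eq_P]
  exact (contDiff_P _ (by fun_prop)).comp contDiff_neg

lemma contDiff_B : ContDiff ℝ 2 B := by
  rw [B_eq_P]; exact contDiff_P _ (by fun_prop)

lemma contDiff_H : ContDiff ℝ 2 H :=
  contDiff_A.div contDiff_B fun x => (B_pos x).ne'

lemma contDiff_derivH : ContDiff ℝ 1 (deriv H) := by
  have h := contDiff_H
  rw [show (2 : WithTop ℕ∞) = 1 + 1 by norm_num, contDiff_succ_iff_deriv] at h
  exact h.2.2

lemma differentiable_H : Differentiable ℝ H := contDiff_H.differentiable (by norm_num)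

lemma differentiable_derivH : Differentiable ℝ (deriv H) :=
  contDiff_derivH.differentiable (by norm_num)

lemma continuous_deriv2H : Continuous (deriv (deriv H)) :=
  contDiff_derivH.continuous_deriv le_rfl

lemma H_eq_fg {x : ℝ} (hx : 0 < x) : H x = fg x := H_eq hx

lemma deriv_H_eq {x : ℝ} (hx : 0 < x) : deriv H x = fg1 x := by
  have he : H =ᶠ[nhds x] fg :=
    Filter.eventuallyEq_of_mem (Ioi_mem_nhds hx) fun y hy => H_eq_fg hy
  exact ((hasDerivAt_fg hx).congr_of_eventuallyEq he).deriv

lemma deriv2_H_eq {x : ℝ} (hx : 0 < x) : deriv (deriv H) x = fg2 x := by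
  have he : deriv H =ᶠ[nhds x] fg1 :=
    Filter.eventuallyEq_of_mem (Ioi_mem_nhds hx) fun y hy => deriv_H_eq hy
  exact ((hasDerivAt_fg1 hx).congr_of_eventuallyEq he).deriv

/-- master bound constant for `H`. -/
lemma exists_K : ∃ K : ℝ, 1 ≤ K ∧
    (∀ x, 0 ≤ x → |H x| ≤ K * Real.exp (-x)) ∧
    (∀ x, 0 ≤ x → |deriv (deriv H) x| ≤ K * Real.exp (-x)) ∧
    (∀ x ∈ Icc (0:ℝ) 1, |H x - 1/2| ≤ K * x) := by
  obtain ⟨M, hM⟩ := isCompact_Icc.exists_bound_of_continuousOn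
    (f := fun x => |H x| + |deriv H x| + |deriv (deriv H) x|)
    (s := Icc (0:ℝ) 1)
    (Continuous.continuousOn (by
      exact ((differentiable_H.continuous.abs.add
        (differentiable_derivH.continuous.abs)).add continuous_deriv2H.abs)))
  have hM0 : 0 ≤ M := by
    have := hM 0 (by norm_num)
    have h0 : (0:ℝ) ≤ |H 0| + |deriv H 0| + |deriv (deriv H) 0| := by
      positivity
    calc (0:ℝ) ≤ _ := h0
      _ ≤ ‖|H 0| + |deriv H 0| + |deriv (deriv H) 0|‖ := le_abs_self _
      _ ≤ M := this
  have hMb : ∀ x ∈ Icc (0:ℝ) 1, |H x| ≤ M ∧ |deriv H x| ≤ M ∧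
      |deriv (deriv H) x| ≤ M := by
    intro x hx
    have := hM x hx
    rw [Real.norm_eq_abs] at this
    have habs : |H x| + |deriv H x| + |deriv (deriv H) x| ≤ M := by
      calc _ ≤ |(|H x| + |deriv H x| + |deriv (deriv H) x|)| :=
            le_abs_self _
        _ ≤ M := this
    refine ⟨?_, ?_, ?_⟩ <;> [skip; skip; skip] <;>
      nlinarith [abs_nonneg (H x), abs_nonneg (deriv H x),
        abs_nonneg (deriv (deriv H) x)]
  refine ⟨M * Real.exp 1 + 21, ?_, ?_, ?_, ?_⟩
  · nlinarith [Real.exp_pos 1]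
  · intro x hx
    rcases le_or_gt x 1 with h1 | h1
    · have := (hMb x ⟨hx, h1⟩).1
      have he : Real.exp 1 * Real.exp (-x) ≥ 1 := by
        rw [← Real.exp_add]
        have : (0:ℝ) ≤ 1 + -x := by linarith
        calc (1:ℝ) = Real.exp 0 := Real.exp_zero.symm
          _ ≤ Real.exp (1 + -x) := Real.exp_le_exp.2 (by linarith)
      nlinarith [Real.exp_pos (-x), Real.exp_pos 1]
    · rw [H_eq_fg (by linarith)]
      have := fg_bound h1.le
      nlinarith [mul_nonneg (mul_nonneg hM0 (Real.exp_pos 1).le) (Real.exp_pos (-x)).le,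
        Real.exp_pos (-x)]
  · intro x hx
    rcases le_or_gt x 1 with h1 | h1
    · have := (hMb x ⟨hx, h1⟩).2.2
      have he : Real.exp 1 * Real.exp (-x) ≥ 1 := by
        rw [← Real.exp_add]
        calc (1:ℝ) = Real.exp 0 := Real.exp_zero.symm
          _ ≤ Real.exp (1 + -x) := Real.exp_le_exp.2 (by linarith)
      nlinarith [Real.exp_pos (-x), Real.exp_pos 1]
    · rw [deriv2_H_eq (by linarith)]
      have := fg2_bound h1.le
      nlinarith [mul_nonneg (mul_nonneg hM0 (Real.exp_pos 1).le) (Real.exp_pos (-x)).le,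
        Real.exp_pos (-x)]
  · intro x hx
    have key : ‖H x - H 0‖ ≤ M * ‖x - 0‖ := by
      apply Convex.norm_image_sub_le_of_norm_hasDerivWithin_le
        (f := H) (f' := deriv H) (s := Icc (0:ℝ) 1)
        (fun y hy => (differentiable_H y).hasDerivAt.hasDerivWithinAt)
        (fun y hy => by rw [Real.norm_eq_abs]; exact (hMb y hy).2.1)
        (convex_Icc _ _) (by norm_num) hx
    rw [H_zero] at key
    rw [Real.norm_eq_abs, Real.norm_eq_abs, sub_zero] at key
    rw [abs_of_nonneg hx.1] at key
    have : M * x ≤ (M * Real.exp 1 + 21) * x := by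
      nlinarith [mul_nonneg (mul_nonneg hM0 (by nlinarith [Real.add_one_le_exp 1] : (0:ℝ) ≤ Real.exp 1 - 1)) hx.1, hx.1]
    linarith


end ThetaAux

namespace ThetaAux

lemma hasDerivAt_phi (a b x : ℝ) :
    HasDerivAt (fun y => (y - a) * (b - y) / 2) ((a + b - 2*x) / 2) x := by
  have h := (((hasDerivAt_id x).sub_const a).mul ((hasDerivAt_const x b).sub (hasDerivAt_id x))).div_const 2
  refine h.congr_deriv ?_
  simp only [id_eq, Pi.sub_apply]
  ring

lemma trapezoid {a b : ℝ} (hab : a ≤ b) :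
    ∫ x in a..b, H x = (b - a) * (H a + H b) / 2
      - ∫ x in a..b, (x - a) * (b - x) / 2 * deriv (deriv H) x := by
  have huIcc : ∀ x : ℝ, x ∈ Set.uIcc a b → True := fun _ _ => trivial
  have step1 : ∫ x in a..b, ((x - a) * (b - x) / 2) * deriv (deriv H) x
      = ((b - a) * (b - b) / 2) * deriv H b - ((a - a) * (b - a) / 2) * deriv H a
        - ∫ x in a..b, ((a + b - 2*x) / 2) * deriv H x := by
    apply intervalIntegral.integral_mul_deriv_eq_deriv_mul
      (fun x _ => hasDerivAt_phi a b x)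
      (fun x _ => (differentiable_derivH x).hasDerivAt)
      (Continuous.intervalIntegrable (by fun_prop) _ _)
      (continuous_deriv2H.intervalIntegrable _ _)
  have step2 : ∫ x in a..b, ((a + b - 2*x) / 2) * deriv H x
      = ((a + b - 2*b) / 2) * H b - ((a + b - 2*a) / 2) * H a
        - ∫ x in a..b, (-1 : ℝ) * H x := by
    apply intervalIntegral.integral_mul_deriv_eq_deriv_mul
      (u := fun y => (a + b - 2*y)/2) (u' := fun _ => (-1 : ℝ))
      (fun x _ => by
        have := ((hasDerivAt_const x (a+b)).sub ((hasDerivAt_id x).const_mul 2)).div_const 2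
        refine this.congr_deriv ?_
        norm_num)
      (fun x _ => (differentiable_H x).hasDerivAt)
      (intervalIntegrable_const)
      ((contDiff_derivH.continuous).intervalIntegrable _ _)
  have step3 : ∫ x in a..b, (-1 : ℝ) * H x = - ∫ x in a..b, H x := by
    rw [intervalIntegral.integral_const_mul]; ring
  rw [step3] at step2
  rw [step2] at step1
  have : ∫ x in a..b, (x - a) * (b - x) / 2 * deriv (deriv H) x
      = ∫ x in a..b, ((x - a) * (b - x) / 2) * deriv (deriv H) x := rfl
  rw [this, step1]
  ring

lemma trap_err {K a b : ℝ} (hab : a ≤ b) (h0 : 0 ≤ a)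
    (hK : ∀ x, 0 ≤ x → |deriv (deriv H) x| ≤ K * Real.exp (-x)) :
    |∫ x in a..b, (x - a) * (b - x) / 2 * deriv (deriv H) x|
      ≤ (b - a)^2 / 8 * ∫ x in a..b, K * Real.exp (-x) := by
  calc |∫ x in a..b, (x - a) * (b - x) / 2 * deriv (deriv H) x|
      ≤ ∫ x in a..b, |(x - a) * (b - x) / 2 * deriv (deriv H) x| :=
        intervalIntegral.abs_integral_le_integral_abs hab
    _ ≤ ∫ x in a..b, (b - a)^2 / 8 * (K * Real.exp (-x)) := by
        apply intervalIntegral.integral_mono_on hab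
        · have hc : Continuous (fun x : ℝ => (x - a) * (b - x) / 2 * deriv (deriv H) x) :=
            ((((continuous_id.sub continuous_const).mul
              (continuous_const.sub continuous_id)).div_const 2).mul continuous_deriv2H)
          exact hc.abs.intervalIntegrable _ _
        · exact Continuous.intervalIntegrable (by fun_prop) _ _
        · intro x hx
          have hx0 : 0 ≤ x := le_trans h0 hx.1
          have h1 : |(x - a) * (b - x) / 2| ≤ (b - a)^2 / 8 := by
            rw [abs_div, abs_of_nonneg (by norm_num : (0:ℝ) ≤ 2), abs_mul]
            rw [abs_of_nonneg (by linarith [hx.1] : (0:ℝ) ≤ x - a),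
              abs_of_nonneg (by linarith [hx.2] : (0:ℝ) ≤ b - x)]
            nlinarith [sq_nonneg (a + b - 2*x)]
          have h2 := hK x hx0
          calc |(x - a) * (b - x) / 2 * deriv (deriv H) x|
              = |(x - a) * (b - x) / 2| * |deriv (deriv H) x| := abs_mul _ _
            _ ≤ (b - a)^2 / 8 * (K * Real.exp (-x)) := by
                apply mul_le_mul h1 h2 (abs_nonneg _)
                positivity
    _ = (b - a)^2 / 8 * ∫ x in a..b, K * Real.exp (-x) := by
        rw [intervalIntegral.integral_const_mul]

lemma integral_exp_neg_interval {a b : ℝ} :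
    ∫ x in a..b, Real.exp (-x) = Real.exp (-a) - Real.exp (-b) := by
  have : ∀ x ∈ Set.uIcc a b, HasDerivAt (fun y => -Real.exp (-y)) (Real.exp (-x)) x := by
    intro x _
    simpa [Pi.neg_def] using ((hasDerivAt_neg x).exp).neg
  rw [intervalIntegral.integral_eq_sub_of_hasDerivAt this
    (Continuous.intervalIntegrable (by fun_prop) _ _)]
  ring

end ThetaAux

namespace ThetaAux

lemma exp_neg_pow (t : ℝ) (n : ℕ) : Real.exp (-t) ^ n = Real.exp (-((n:ℝ) * t)) := by
  rw [← Real.exp_nat_mul]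
  ring_nf

lemma summable_H_nat {t : ℝ} (ht : 0 < t) {K : ℝ}
    (hKH : ∀ x, 0 ≤ x → |H x| ≤ K * Real.exp (-x)) :
    Summable (fun n : ℕ => H ((n:ℝ) * t)) := by
  have hr1 : Real.exp (-t) < 1 := by
    rw [Real.exp_lt_one_iff]; linarith
  apply Summable.of_norm_bounded (g := fun n : ℕ => K * Real.exp (-t) ^ n)
    ((summable_geometric_of_lt_one (Real.exp_pos _).le hr1).mul_left K)
  intro n
  rw [Real.norm_eq_abs, exp_neg_pow]
  exact hKH _ (by positivity)

lemma integrableOn_expneg {K : ℝ} : IntegrableOn (fun x => K * Real.exp (-x)) (Set.Ioi (0:ℝ)) := by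
  have h := (exp_neg_integrableOn_Ioi 0 one_pos).const_mul K
  simpa [IntegrableOn] using h

lemma integrableOn_H {K : ℝ}
    (hKH : ∀ x, 0 ≤ x → |H x| ≤ K * Real.exp (-x)) :
    IntegrableOn H (Set.Ioi (0:ℝ)) := by
  apply Integrable.mono' integrableOn_expneg
    (differentiable_H.continuous.aestronglyMeasurable.restrict)
  rw [ae_restrict_iff' measurableSet_Ioi]
  exact Eventually.of_forall fun x hx => by
    rw [Real.norm_eq_abs]; exact hKH x (le_of_lt hx)

lemma sum_est {K : ℝ} (hK1 : 1 ≤ K)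
    (hKH : ∀ x, 0 ≤ x → |H x| ≤ K * Real.exp (-x))
    (hK2 : ∀ x, 0 ≤ x → |deriv (deriv H) x| ≤ K * Real.exp (-x))
    {t : ℝ} (ht : 0 < t) :
    |t * (∑' n : ℕ, H (((n:ℝ)+1) * t)) + t/4 - ∫ x in Set.Ioi (0:ℝ), H x|
      ≤ K * t^2 / 8 := by
  set I := ∫ x in Set.Ioi (0:ℝ), H x with hI
  have hsum0 : Summable (fun n : ℕ => H ((n:ℝ) * t)) := summable_H_nat ht hKH
  have htsum : ∑' n : ℕ, H ((n:ℝ)*t) = H 0 + ∑' n : ℕ, H (((n:ℝ)+1)*t) := by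
    rw [Summable.tsum_eq_zero_add hsum0]
    push_cast
    norm_num
  -- partial trapezoid bound
  have key : ∀ N : ℕ, |(∑ n ∈ Finset.range N, t * (H ((n:ℝ)*t) + H (((n:ℝ)+1)*t)) / 2)
      - ∫ x in (0:ℝ)..((N:ℝ)*t), H x| ≤ K * t^2 / 8 := by
    intro N
    set a : ℕ → ℝ := fun k => (k:ℝ) * t with ha
    have hsplit : ∑ k ∈ Finset.range N, ∫ x in a k..a (k+1), H x
        = ∫ x in (a 0)..(a N), H x :=
      intervalIntegral.sum_integral_adjacent_intervals
        (fun k _ => (differentiable_H.continuous.intervalIntegrable _ _))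
    have hsplitE : ∑ k ∈ Finset.range N, ∫ x in a k..a (k+1), K * Real.exp (-x)
        = ∫ x in (a 0)..(a N), K * Real.exp (-x) :=
      intervalIntegral.sum_integral_adjacent_intervals
        (fun k _ => (Continuous.intervalIntegrable (by fun_prop) _ _))
    have ha0 : a 0 = 0 := by simp [ha]
    have haN : a N = (N:ℝ)*t := rfl
    have hastep : ∀ k : ℕ, a (k+1) = ((k:ℝ)+1) * t := by
      intro k; simp only [ha]; push_cast; ring
    have hamono : ∀ k : ℕ, a k ≤ a (k+1) := by
      intro k
      have hk : (0:ℝ) ≤ (k:ℝ) := Nat.cast_nonneg k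
      simp only [ha]
      push_cast
      nlinarith
    have hapos : ∀ k : ℕ, 0 ≤ a k := by
      intro k; simp only [ha]; positivity
    calc |(∑ n ∈ Finset.range N, t * (H ((n:ℝ)*t) + H (((n:ℝ)+1)*t)) / 2)
        - ∫ x in (0:ℝ)..((N:ℝ)*t), H x|
        = |∑ n ∈ Finset.range N, (t * (H (a n) + H (a (n+1))) / 2 - ∫ x in a n..a (n+1), H x)| := by
          rw [Finset.sum_sub_distrib, hsplit, ha0, haN]
          congr 2
          apply Finset.sum_congr rfl
          intro n _
          rw [hastep n]
      _ ≤ ∑ n ∈ Finset.range N, |t * (H (a n) + H (a (n+1))) / 2 - ∫ x in a n..a (n+1), H x| :=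
          Finset.abs_sum_le_sum_abs _ _
      _ ≤ ∑ n ∈ Finset.range N, t^2/8 * ∫ x in a n..a (n+1), K * Real.exp (-x) := by
          apply Finset.sum_le_sum
          intro n _
          have htrap := trapezoid (a := a n) (b := a (n+1)) (hamono n)
          have hba : a (n+1) - a n = t := by rw [hastep n, ha]; ring
          have : t * (H (a n) + H (a (n+1))) / 2 - ∫ x in a n..a (n+1), H x
              = ∫ x in a n..a (n+1), (x - a n) * (a (n+1) - x) / 2 * deriv (deriv H) x := by
            rw [htrap, hba]; ring
          rw [this]
          have := trap_err (hamono n) (hapos n) hK2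
          rw [hba] at this
          exact this
      _ = t^2/8 * ∫ x in (a 0)..(a N), K * Real.exp (-x) := by
          rw [← Finset.mul_sum, hsplitE]
      _ ≤ K * t^2/8 := by
          rw [intervalIntegral.integral_const_mul, integral_exp_neg_interval, ha0, haN]
          have h1 : Real.exp (-(0:ℝ)) - Real.exp (-((N:ℝ)*t)) ≤ 1 := by
            rw [neg_zero, Real.exp_zero]
            have := (Real.exp_pos (-((N:ℝ)*t))).le
            linarith
          have h2 : (0:ℝ) ≤ Real.exp (-(0:ℝ)) - Real.exp (-((N:ℝ)*t)) := by
            rw [neg_zero, Real.exp_zero]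
            have : Real.exp (-((N:ℝ)*t)) ≤ 1 := by
              rw [Real.exp_le_one_iff]
              nlinarith [mul_nonneg (Nat.cast_nonneg N : (0:ℝ) ≤ (N:ℝ)) ht.le]
            linarith
          have hK0 : (0:ℝ) ≤ K := by linarith
          calc t^2/8 * (K * (Real.exp (-(0:ℝ)) - Real.exp (-((N:ℝ)*t))))
              ≤ t^2/8 * (K * 1) := by
                apply mul_le_mul_of_nonneg_left _ (by positivity)
                exact mul_le_mul_of_nonneg_left h1 hK0
            _ = K * t^2/8 := by ring
  -- rewrite partial sums
  have hTS : ∀ N : ℕ, (∑ n ∈ Finset.range N, t * (H ((n:ℝ)*t) + H (((n:ℝ)+1)*t)) / 2)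
      = t * (∑ n ∈ Finset.range N, H ((n:ℝ)*t)) + t * (H ((N:ℝ)*t) - H 0) / 2 := by
    intro N
    induction N with
    | zero => simp
    | succ N ih =>
      rw [Finset.sum_range_succ, ih, Finset.sum_range_succ]
      push_cast
      ring
  -- limits
  have hr1 : Real.exp (-t) < 1 := by rw [Real.exp_lt_one_iff]; linarith
  have T1 : Tendsto (fun N : ℕ => ∑ n ∈ Finset.range N, H ((n:ℝ)*t)) atTop
      (nhds (∑' n : ℕ, H ((n:ℝ)*t))) := hsum0.hasSum.tendsto_sum_nat
  have T2 : Tendsto (fun N : ℕ => H ((N:ℝ)*t)) atTop (nhds 0) := by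
    have hb : ∀ n : ℕ, ‖H ((n:ℝ)*t)‖ ≤ K * Real.exp (-t) ^ n := by
      intro n
      rw [Real.norm_eq_abs, exp_neg_pow]
      exact hKH _ (by positivity)
    have hg : Tendsto (fun n : ℕ => K * Real.exp (-t) ^ n) atTop (nhds 0) := by
      have := (tendsto_pow_atTop_nhds_zero_of_lt_one (Real.exp_pos (-t)).le hr1).const_mul K
      simpa using this
    exact squeeze_zero_norm hb hg
  have T3 : Tendsto (fun N : ℕ => ∫ x in (0:ℝ)..((N:ℝ)*t), H x) atTop (nhds I) := by
    apply MeasureTheory.intervalIntegral_tendsto_integral_Ioi 0 (integrableOn_H hKH)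
    exact (tendsto_natCast_atTop_atTop).atTop_mul_const ht
  have Tall : Tendsto (fun N : ℕ => |t * (∑ n ∈ Finset.range N, H ((n:ℝ)*t))
      + t * (H ((N:ℝ)*t) - H 0) / 2 - ∫ x in (0:ℝ)..((N:ℝ)*t), H x|) atTop
      (nhds (|t * (∑' n : ℕ, H ((n:ℝ)*t)) + t * (0 - H 0) / 2 - I|)) := by
    apply Tendsto.abs
    apply Tendsto.sub _ T3
    apply Tendsto.add (T1.const_mul t)
    exact (Tendsto.div_const ((T2.sub_const (H 0)).const_mul t) 2)
  have hfin : |t * (∑' n : ℕ, H ((n:ℝ)*t)) + t * (0 - H 0) / 2 - I| ≤ K * t^2 / 8 := by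
    apply le_of_tendsto Tall
    apply Eventually.of_forall
    intro N
    have := key N
    rw [hTS N] at this
    exact this
  have heq : t * (∑' n : ℕ, H ((n:ℝ)*t)) + t * (0 - H 0) / 2 - I
      = t * (∑' n : ℕ, H (((n:ℝ)+1)*t)) + t/4 - I := by
    rw [htsum, H_zero]
    ring
  rw [heq] at hfin
  exact hfin

end ThetaAux

namespace ThetaAux

lemma integral_exp_neg_mul_Ioi' {c : ℝ} (hc : 0 < c) :
    ∫ x in Set.Ioi (0:ℝ), Real.exp (-(c*x)) = 1/c := by
  have hint : IntegrableOn (fun x => Real.exp (-(c*x))) (Set.Ioi (0:ℝ)) := by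
    have := exp_neg_integrableOn_Ioi 0 hc
    simpa [neg_mul] using this
  have key : Tendsto (fun T : ℕ => ∫ x in (0:ℝ)..(T:ℝ), Real.exp (-(c*x))) atTop
      (nhds (∫ x in Set.Ioi (0:ℝ), Real.exp (-(c*x)))) :=
    MeasureTheory.intervalIntegral_tendsto_integral_Ioi 0 hint tendsto_natCast_atTop_atTop
  have hval : ∀ T : ℝ, ∫ x in (0:ℝ)..T, Real.exp (-(c*x)) = (1 - Real.exp (-(c*T)))/c := by
    intro T
    have hD : ∀ x ∈ Set.uIcc (0:ℝ) T, HasDerivAt (fun y => -Real.exp (-(c*y))/c)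
        (Real.exp (-(c*x))) x := by
      intro x _
      have h1 : HasDerivAt (fun y : ℝ => -(c*y)) (-c) x := by
        simpa [Pi.neg_def] using ((hasDerivAt_id x).const_mul c).neg
      have := (h1.exp.neg).div_const c
      refine this.congr_deriv ?_
      field_simp
    rw [intervalIntegral.integral_eq_sub_of_hasDerivAt hD
      (Continuous.intervalIntegrable (by fun_prop) _ _)]
    simp only [mul_zero, neg_zero, Real.exp_zero]
    field_simp
    ring
  have key2 : Tendsto (fun T : ℕ => (1 - Real.exp (-(c*(T:ℝ))))/c) atTop (nhds (1/c)) := by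
    have h1 : Tendsto (fun T : ℕ => Real.exp (-(c*(T:ℝ)))) atTop (nhds 0) := by
      have hb : ∀ T : ℕ, Real.exp (-(c*(T:ℝ))) = Real.exp (-c) ^ T := by
        intro T; rw [← Real.exp_nat_mul]; ring_nf
      simp_rw [hb]
      exact tendsto_pow_atTop_nhds_zero_of_lt_one (Real.exp_pos _).le
        (by rw [Real.exp_lt_one_iff]; linarith)
    have := (tendsto_const_nhds (x := (1:ℝ)).sub h1).div_const c
    simpa using this
  exact tendsto_nhds_unique (key.congr fun T : ℕ => hval ((T:ℝ))) key2

lemma diffexp_bound {c y x : ℝ} (hc : 0 < c) (hy : c ≤ y) (hx : 0 < x) :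
    0 ≤ (Real.exp (-(c*x)) - Real.exp (-(y*x)))/x ∧
    (Real.exp (-(c*x)) - Real.exp (-(y*x)))/x ≤ (y - c) * Real.exp (-(c*x)) := by
  have h1 : Real.exp (-(y*x)) = Real.exp (-(c*x)) * Real.exp (-((y-c)*x)) := by
    rw [← Real.exp_add]; ring_nf
  have h2 : 1 - Real.exp (-((y-c)*x)) ≤ (y-c)*x := by
    have := Real.add_one_le_exp (-((y-c)*x)); linarith
  have h3 : 0 ≤ 1 - Real.exp (-((y-c)*x)) := by
    have : Real.exp (-((y-c)*x)) ≤ 1 := by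
      rw [Real.exp_le_one_iff]; nlinarith
    linarith
  have hE := Real.exp_pos (-(c*x))
  constructor
  · apply div_nonneg _ hx.le
    nlinarith
  · rw [div_le_iff₀ hx]
    nlinarith

lemma integrableOn_diffexp {c y : ℝ} (hc : 0 < c) (hy : c ≤ y) :
    IntegrableOn (fun x => (Real.exp (-(c*x)) - Real.exp (-(y*x)))/x) (Set.Ioi (0:ℝ)) := by
  have hint : IntegrableOn (fun x => (y - c) * Real.exp (-(c*x))) (Set.Ioi (0:ℝ)) := by
    have := (exp_neg_integrableOn_Ioi 0 hc).const_mul (y - c)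
    simpa [neg_mul, IntegrableOn] using this
  apply Integrable.mono' hint
  · apply ContinuousOn.aestronglyMeasurable _ measurableSet_Ioi
    apply ContinuousOn.div (Continuous.continuousOn (by fun_prop)) continuousOn_id
    intro x hx
    exact ne_of_gt hx
  · rw [ae_restrict_iff' measurableSet_Ioi]
    apply Eventually.of_forall
    intro x hx
    obtain ⟨hge, hle⟩ := diffexp_bound hc hy hx
    rw [Real.norm_eq_abs, abs_of_nonneg hge]
    exact hle

lemma frullani_exp {c d : ℝ} (hc : 0 < c) (hcd : c ≤ d) :
    ∫ x in Set.Ioi (0:ℝ), (Real.exp (-(c*x)) - Real.exp (-(d*x)))/x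
      = Real.log d - Real.log c := by
  set F : ℝ → ℝ := fun y => ∫ x in Set.Ioi (0:ℝ), (Real.exp (-(c*x)) - Real.exp (-(y*x)))/x
    with hF_def
  have hd0 : 0 < d := lt_of_lt_of_le hc hcd
  have hF : ∀ y ∈ Set.uIcc c d, HasDerivAt F (1/y) y := by
    intro y hy
    rw [Set.uIcc_of_le hcd] at hy
    have hy0 : 0 < y := lt_of_lt_of_le hc hy.1
    have key := hasDerivAt_integral_of_dominated_loc_of_deriv_le
      (μ := MeasureTheory.volume.restrict (Set.Ioi (0:ℝ)))
      (F := fun z x => (Real.exp (-(c*x)) - Real.exp (-(z*x)))/x)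
      (F' := fun z x => Real.exp (-(z*x))) (x₀ := y)
      (bound := fun x => Real.exp (-(y/2*x)))
      (Metric.ball_mem_nhds y (by positivity : (0:ℝ) < y/2))
      (Eventually.of_forall fun z => by
        apply ContinuousOn.aestronglyMeasurable _ measurableSet_Ioi
        apply ContinuousOn.div (Continuous.continuousOn (by fun_prop)) continuousOn_id
        intro x hx
        exact ne_of_gt hx)
      (integrableOn_diffexp hc hy.1)
      ((Continuous.aestronglyMeasurable (by fun_prop)).restrict)
      ?_ ?_ ?_
    · have h2 := key.2
      rwa [show ∫ x in Set.Ioi (0:ℝ), Real.exp (-(y*x)) = 1/y from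
        integral_exp_neg_mul_Ioi' hy0] at h2
    · rw [ae_restrict_iff' measurableSet_Ioi]
      apply Eventually.of_forall
      intro x hx z hz
      rw [Real.norm_eq_abs, Real.abs_exp, Real.exp_le_exp]
      have : |z - y| < y/2 := by
        rw [Metric.mem_ball, Real.dist_eq] at hz
        exact hz
      have hz2 : y/2 ≤ z := by
        cases abs_lt.1 this with
        | intro h1 h2 => linarith
      have hx0 : (0:ℝ) < x := hx
      nlinarith [mul_le_mul_of_nonneg_right hz2 hx0.le]
    · have : IntegrableOn (fun x => Real.exp (-(y/2*x))) (Set.Ioi (0:ℝ)) := by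
        have := exp_neg_integrableOn_Ioi 0 (show 0 < y/2 by positivity)
        simpa [neg_mul] using this
      exact this
    · rw [ae_restrict_iff' measurableSet_Ioi]
      apply Eventually.of_forall
      intro x hx z hz
      have h1 : HasDerivAt (fun z : ℝ => -(z*x)) (-x) z := by
        simpa [Pi.neg_def] using (hasDerivAt_mul_const x).neg
      have h2 := ((hasDerivAt_const z (Real.exp (-(c*x)))).sub h1.exp).div_const x
      refine h2.congr_deriv ?_
      field_simp [ne_of_gt (show (0:ℝ) < x from hx)]
      ring
  have hFTC : ∫ y in c..d, 1/y = F d - F c :=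
    intervalIntegral.integral_eq_sub_of_hasDerivAt hF
      (intervalIntegral.intervalIntegrable_one_div
        (fun y hy => by
          rw [Set.uIcc_of_le hcd] at hy
          exact ne_of_gt (lt_of_lt_of_le hc hy.1))
        (by fun_prop))
  have hlog : ∫ y in c..d, 1/y = Real.log d - Real.log c := by
    rw [integral_one_div_of_pos hc hd0, Real.log_div (ne_of_gt hd0) (ne_of_gt hc)]
  have hFc : F c = 0 := by
    rw [hF_def]
    simp
  rw [hlog, hFc, sub_zero] at hFTC
  exact hFTC.symm

end ThetaAux

namespace ThetaAux

lemma integrableOn_exp_neg_mul {c : ℝ} (hc : 0 < c) :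
    IntegrableOn (fun x => Real.exp (-(c*x))) (Set.Ioi (0:ℝ)) := by
  have h := exp_neg_integrableOn_Ioi 0 hc
  have heq : (fun x : ℝ => Real.exp (-c * x)) = fun x => Real.exp (-(c*x)) := by
    funext x; ring_nf
  rwa [heq] at h

noncomputable def phi (k : ℕ) (x : ℝ) : ℝ :=
  Real.exp (-(((k:ℝ)+1)*x)) - (Real.exp (-(((k:ℝ)+1)*x)) - Real.exp (-(((k:ℝ)+2)*x)))/x

lemma phi_eq {k : ℕ} {x : ℝ} (hx : 0 < x) :
    phi k x = Real.exp (-x)^(k+1) * (1 - (1 - Real.exp (-x))/x) := by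
  have h1 : Real.exp (-x)^(k+1) = Real.exp (-(((k:ℝ)+1)*x)) := by
    rw [exp_neg_pow]; push_cast; ring_nf
  have h2 : Real.exp (-x)^(k+2) = Real.exp (-(((k:ℝ)+2)*x)) := by
    rw [exp_neg_pow]; push_cast; ring_nf
  rw [phi, ← h1, ← h2]
  have : Real.exp (-x) ^ (k + 2) = Real.exp (-x)^(k+1) * Real.exp (-x) := by ring
  rw [this]
  field_simp

lemma phi_nonneg (k : ℕ) {x : ℝ} (hx : 0 < x) : 0 ≤ phi k x := by
  rw [phi_eq hx]
  apply mul_nonneg (pow_nonneg (Real.exp_pos _).le _)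
  have h1 : 1 - Real.exp (-x) ≤ x := by
    have := Real.add_one_le_exp (-x); linarith
  have h2 : (1 - Real.exp (-x))/x ≤ 1 := by
    rw [div_le_one hx]; exact h1
  linarith

lemma hasSum_phi {x : ℝ} (hx : 0 < x) : HasSum (fun k : ℕ => phi k x) (H x) := by
  set r := Real.exp (-x) with hr
  have hr0 : 0 ≤ r := (Real.exp_pos _).le
  have hr1 : r < 1 := by rw [hr, Real.exp_lt_one_iff]; linarith
  have hgeo : HasSum (fun k : ℕ => r^(k+1)) (r * (1 - r)⁻¹) := by
    have h := (hasSum_geometric_of_lt_one hr0 hr1).mul_left r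
    have heq : (fun k : ℕ => r * r^k) = fun k : ℕ => r^(k+1) := by
      funext k; rw [pow_succ]; ring
    rwa [heq] at h
  have hmul := hgeo.mul_right (1 - (1 - r)/x)
  have heq : (fun k : ℕ => r^(k+1) * (1 - (1 - r)/x)) = fun k : ℕ => phi k x := by
    funext k; rw [phi_eq hx]
  rw [heq] at hmul
  have hval : r * (1 - r)⁻¹ * (1 - (1 - r)/x) = H x := by
    rw [H_eq hx, hr, Real.exp_neg]
    have hE1 : (1:ℝ) < Real.exp x := by
      rw [show (1:ℝ) = Real.exp 0 from Real.exp_zero.symm]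
      exact Real.exp_lt_exp.2 hx
    have hE0 : Real.exp x ≠ 0 := (Real.exp_pos x).ne'
    have hEm1 : Real.exp x - 1 ≠ 0 := by intro h; nlinarith
    have hr1' : 1 - (Real.exp x)⁻¹ ≠ 0 := by
      intro h
      have : (Real.exp x)⁻¹ = 1 := by linarith
      have : Real.exp x = 1 := by
        field_simp at this
        linarith
      nlinarith
    field_simp
  rw [hval] at hmul
  exact hmul

lemma integrableOn_phi (k : ℕ) : IntegrableOn (phi k) (Set.Ioi (0:ℝ)) := by
  have h1 : IntegrableOn (fun x => Real.exp (-(((k:ℝ)+1)*x))) (Set.Ioi (0:ℝ)) :=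
    integrableOn_exp_neg_mul (by positivity)
  exact h1.sub (integrableOn_diffexp (by positivity) (by linarith))

lemma integral_phi (k : ℕ) : ∫ x in Set.Ioi (0:ℝ), phi k x
    = 1/((k:ℝ)+1) - (Real.log ((k:ℝ)+2) - Real.log ((k:ℝ)+1)) := by
  have h1 : IntegrableOn (fun x => Real.exp (-(((k:ℝ)+1)*x))) (Set.Ioi (0:ℝ)) :=
    integrableOn_exp_neg_mul (by positivity)
  have h2 := integrableOn_diffexp (show (0:ℝ) < (k:ℝ)+1 by positivity)
    (show ((k:ℝ)+1) ≤ (k:ℝ)+2 by linarith)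
  simp only [phi]
  rw [MeasureTheory.integral_sub h1 h2,
    integral_exp_neg_mul_Ioi' (show (0:ℝ) < (k:ℝ)+1 by positivity),
    frullani_exp (show (0:ℝ) < (k:ℝ)+1 by positivity) (by linarith)]

lemma hasSum_eulerSeq : HasSum (fun k : ℕ => 1/((k:ℝ)+1) - (Real.log ((k:ℝ)+2) - Real.log ((k:ℝ)+1)))
    Real.eulerMascheroniConstant := by
  have hnn : ∀ k : ℕ, 0 ≤ 1/((k:ℝ)+1) - (Real.log ((k:ℝ)+2) - Real.log ((k:ℝ)+1)) := by
    intro k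
    have h := Real.log_le_sub_one_of_pos (show (0:ℝ) < ((k:ℝ)+2)/((k:ℝ)+1) by positivity)
    rw [Real.log_div (by positivity) (by positivity)] at h
    have he : ((k:ℝ)+2)/((k:ℝ)+1) - 1 = 1/((k:ℝ)+1) := by
      rw [div_sub_one (by positivity : ((k:ℝ)+1) ≠ 0)]
      norm_num
    linarith [he ▸ h]
  rw [hasSum_iff_tendsto_nat_of_nonneg hnn]
  have hps : ∀ N : ℕ, ∑ k ∈ Finset.range N,
      (1/((k:ℝ)+1) - (Real.log ((k:ℝ)+2) - Real.log ((k:ℝ)+1)))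
      = ((harmonic N : ℚ) : ℝ) - Real.log ((N:ℝ)+1) := by
    intro N
    induction N with
    | zero => simp
    | succ N ih =>
      rw [Finset.sum_range_succ, ih, harmonic_succ]
      push_cast
      ring_nf
  exact Real.tendsto_eulerMascheroniSeq.congr fun n => by
    simp only [Real.eulerMascheroniSeq]
    rw [hps n]

lemma integral_H : ∫ x in Set.Ioi (0:ℝ), H x = Real.eulerMascheroniConstant := by
  have hint : ∀ k : ℕ, Integrable (phi k) (MeasureTheory.volume.restrict (Set.Ioi (0:ℝ))) :=
    integrableOn_phi
  have hnormval : ∀ k : ℕ, ∫ x in Set.Ioi (0:ℝ), ‖phi k x‖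
      = 1/((k:ℝ)+1) - (Real.log ((k:ℝ)+2) - Real.log ((k:ℝ)+1)) := by
    intro k
    rw [← integral_phi k]
    apply MeasureTheory.integral_congr_ae
    rw [Filter.EventuallyEq, ae_restrict_iff' measurableSet_Ioi]
    apply Eventually.of_forall
    intro x hx
    rw [Real.norm_eq_abs, abs_of_nonneg (phi_nonneg k hx)]
  have hnorm : Summable (fun k : ℕ => ∫ x in Set.Ioi (0:ℝ), ‖phi k x‖) := by
    apply Summable.congr hasSum_eulerSeq.summable
    intro k
    rw [hnormval k]
  have key := MeasureTheory.integral_tsum_of_summable_integral_norm hint hnorm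
  have h1 : ∫ x in Set.Ioi (0:ℝ), (∑' k : ℕ, phi k x) = ∫ x in Set.Ioi (0:ℝ), H x := by
    apply MeasureTheory.integral_congr_ae
    rw [Filter.EventuallyEq, ae_restrict_iff' measurableSet_Ioi]
    apply Eventually.of_forall
    intro x hx
    exact (hasSum_phi hx).tsum_eq
  have h2 : ∑' k : ℕ, ∫ x in Set.Ioi (0:ℝ), phi k x = Real.eulerMascheroniConstant := by
    have : (fun k : ℕ => ∫ x in Set.Ioi (0:ℝ), phi k x)
        = fun k : ℕ => 1/((k:ℝ)+1) - (Real.log ((k:ℝ)+2) - Real.log ((k:ℝ)+1)) := by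
      funext k; exact integral_phi k
    rw [this]
    exact hasSum_eulerSeq.tsum_eq
  rw [← h1, ← key, h2]

end ThetaAux

namespace ThetaAux

lemma exp_taylor3 {t : ℝ} (ht0 : 0 < t) (ht1 : t ≤ 1) :
    |Real.exp (-t) - (1 - t + t^2/2)| ≤ (2/9) * t^3 := by
  have h := Real.exp_bound (x := -t) (by rw [abs_neg, abs_of_pos ht0]; exact ht1)
    (n := 3) (by norm_num)
  simp only [Finset.sum_range_succ, Finset.sum_range_zero] at h
  norm_num [Nat.factorial] at h
  rw [abs_of_pos ht0] at h
  calc |Real.exp (-t) - (1 - t + t^2/2)| = |Real.exp (-t) - (1 + -t + t^2/2)| := by ring_nf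
    _ ≤ t^3 * (2/9) := h
    _ = (2/9) * t^3 := by ring

/-- the logarithmic piece: `-log(1-e^{-t}) = -log t + t/2 + O(t²)`. -/
lemma log_est {t : ℝ} (ht0 : 0 < t) (ht1 : t ≤ 1) :
    |(-Real.log (1 - Real.exp (-t))) - (-Real.log t + t/2)| ≤ 3 * t^2 := by
  set u := (Real.exp (-t) - 1 + t)/t with hu_def
  have hexp := exp_taylor3 ht0 ht1
  have hu0 : 0 ≤ u := by
    apply div_nonneg _ ht0.le
    have := Real.add_one_le_exp (-t)
    linarith
  have hu_half : |u - t/2| ≤ (2/9) * t^2 := by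
    have : u - t/2 = (Real.exp (-t) - (1 - t + t^2/2))/t := by
      rw [hu_def]; field_simp; ring
    rw [this, abs_div, abs_of_pos ht0, div_le_iff₀ ht0]
    calc |Real.exp (-t) - (1 - t + t^2/2)| ≤ (2/9) * t^3 := hexp
      _ = 2/9 * t^2 * t := by ring
  have hu34 : u ≤ 3/4 * t := by
    have h1 : u ≤ t/2 + (2/9)*t^2 := by
      have := abs_le.1 hu_half
      linarith [this.2]
    nlinarith
  have hu34' : u ≤ 3/4 := by nlinarith
  have hulit : |u| < 1 := by
    rw [abs_of_nonneg hu0]; linarith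
  have hlogu : |u + Real.log (1 - u)| ≤ (9/4) * t^2 := by
    have h := Real.abs_log_sub_add_sum_range_le hulit 1
    simp only [Finset.sum_range_succ, Finset.sum_range_zero] at h
    norm_num at h
    rw [abs_of_nonneg hu0] at h
    have h2 : u^2/(1-u) ≤ 4 * u^2 := by
      rw [div_le_iff₀ (by linarith)]
      nlinarith
    have h3 : u^2 ≤ (9/16) * t^2 := by nlinarith
    calc |u + Real.log (1-u)| ≤ u^(1+1)/(1-u) := h
      _ = u^2/(1-u) := by norm_num
      _ ≤ 4 * u^2 := h2
      _ ≤ (9/4) * t^2 := by nlinarith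
  -- 1 - exp(-t) = t * (1 - u)
  have hfact : 1 - Real.exp (-t) = t * (1 - u) := by
    rw [hu_def]; field_simp
    ring
  have h1u : 0 < 1 - u := by linarith
  have hloge : Real.log (1 - Real.exp (-t)) = Real.log t + Real.log (1 - u) := by
    rw [hfact, Real.log_mul ht0.ne' h1u.ne']
  rw [hloge]
  have : -(Real.log t + Real.log (1 - u)) - (-Real.log t + t/2)
      = -(u + Real.log (1 - u)) + (u - t/2) := by ring
  rw [this]
  calc |(-(u + Real.log (1-u))) + (u - t/2)| ≤ |(-(u + Real.log (1-u)))| + |u - t/2| := abs_add_le _ _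
    _ = |u + Real.log (1-u)| + |u - t/2| := by rw [abs_neg]
    _ ≤ (9/4)*t^2 + (2/9)*t^2 := add_le_add hlogu hu_half
    _ ≤ 3 * t^2 := by nlinarith

end ThetaAux

/-- The trace of the Euclidean wave group: `Θ(t) = ∑_{n=1}^∞ 1/(e^{nt}-1)`. -/
noncomputable def Theta (t : ℝ) : ℝ := ∑' n : ℕ, 1 / (Real.exp (((n : ℝ) + 1) * t) - 1)

namespace ThetaAux

lemma Theta_split {K : ℝ} (hKH : ∀ x, 0 ≤ x → |H x| ≤ K * Real.exp (-x))
    {t : ℝ} (ht : 0 < t) :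
    Theta t = (∑' n : ℕ, H (((n:ℝ)+1)*t)) + (-Real.log (1 - Real.exp (-t)))/t := by
  have hr0 : (0:ℝ) ≤ Real.exp (-t) := (Real.exp_pos _).le
  have hr1 : Real.exp (-t) < 1 := by rw [Real.exp_lt_one_iff]; linarith
  have hsum1 : Summable (fun n : ℕ => H (((n:ℝ)+1)*t)) := by
    have h0 := summable_H_nat ht hKH
    have h := (summable_nat_add_iff 1).2 h0
    apply h.congr
    intro n
    push_cast
    ring_nf
  have hsum2 : Summable (fun n : ℕ => Real.exp (-(((n:ℝ)+1)*t))/(((n:ℝ)+1)*t)) := by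
    have hg : Summable (fun n : ℕ => (1/t) * Real.exp (-t)^(n+1)) := by
      have h := ((summable_geometric_of_lt_one hr0 hr1).mul_left (Real.exp (-t))).mul_left (1/t)
      apply h.congr
      intro n
      rw [pow_succ]
      ring
    apply Summable.of_norm_bounded hg
    intro n
    have hpos : (0:ℝ) < ((n:ℝ)+1)*t := by positivity
    have h1 : Real.exp (-(((n:ℝ)+1)*t)) = Real.exp (-t)^(n+1) := by
      rw [exp_neg_pow]; push_cast; ring_nf
    rw [Real.norm_eq_abs, abs_div, abs_of_pos (Real.exp_pos _), abs_of_pos hpos, h1,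
      div_le_iff₀ hpos]
    have h2 : (1:ℝ) ≤ (n:ℝ)+1 := by
      have : (0:ℝ) ≤ (n:ℝ) := Nat.cast_nonneg n
      linarith
    have h3 : (0:ℝ) < Real.exp (-t)^(n+1) := by positivity
    calc Real.exp (-t)^(n+1) = 1/t * Real.exp (-t)^(n+1) * t := by field_simp
      _ ≤ 1/t * Real.exp (-t)^(n+1) * (((n:ℝ)+1)*t) := by
          apply mul_le_mul_of_nonneg_left _ (by positivity)
          nlinarith
  have hterm : ∀ n : ℕ, 1 / (Real.exp (((n:ℝ)+1)*t) - 1)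
      = H (((n:ℝ)+1)*t) + Real.exp (-(((n:ℝ)+1)*t))/(((n:ℝ)+1)*t) := by
    intro n
    have hpos : (0:ℝ) < ((n:ℝ)+1)*t := by positivity
    rw [H_eq hpos]
    ring
  have hlog : ∑' n : ℕ, Real.exp (-(((n:ℝ)+1)*t))/(((n:ℝ)+1)*t)
      = (-Real.log (1 - Real.exp (-t)))/t := by
    have hgeo := Real.hasSum_pow_div_log_of_abs_lt_one
      (x := Real.exp (-t)) (by rw [abs_of_nonneg hr0]; exact hr1)
    have h := hgeo.div_const t
    have heq : (fun n : ℕ => Real.exp (-t)^(n+1)/((n:ℝ)+1)/t)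
        = fun n : ℕ => Real.exp (-(((n:ℝ)+1)*t))/(((n:ℝ)+1)*t) := by
      funext n
      have h1 : Real.exp (-(((n:ℝ)+1)*t)) = Real.exp (-t)^(n+1) := by
        rw [exp_neg_pow]; push_cast; ring_nf
      rw [h1, div_div]
    rw [heq] at h
    exact h.tsum_eq
  rw [Theta, ← hlog, ← Summable.tsum_add hsum1 hsum2]
  apply tsum_congr
  intro n
  exact hterm n

end ThetaAux

open ThetaAux in
/-- `Θ(t) = -ln t / t + γ/t + 1/4 + O(t)` as `t → 0⁺`. -/
theorem Theta_asymptotic_zero :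
    (fun t : ℝ => Theta t - (-Real.log t / t + Real.eulerMascheroniConstant / t + 1 / 4))
      =O[nhdsWithin 0 (Set.Ioi 0)] (fun t : ℝ => t) := by
  obtain ⟨K, hK1, hKH, hK2, _⟩ := exists_K
  rw [Asymptotics.isBigO_iff]
  refine ⟨K/8 + 3, ?_⟩
  have hmem : Set.Ioo (0:ℝ) 1 ∈ nhdsWithin 0 (Set.Ioi 0) :=
    Ioo_mem_nhdsGT_of_mem (by constructor <;> norm_num)
  filter_upwards [hmem] with t ht
  obtain ⟨ht0, ht1⟩ := ht
  set γ := Real.eulerMascheroniConstant with hγ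
  set S := ∑' n : ℕ, H (((n:ℝ)+1)*t) with hS
  set L := -Real.log (1 - Real.exp (-t)) with hL
  have hsplit : Theta t = S + L/t := Theta_split hKH ht0
  have hsum := sum_est hK1 hKH hK2 ht0
  rw [integral_H] at hsum
  have hlog := log_est ht0 ht1.le
  -- divide both estimates by t
  have hsum' : |S + 1/4 - γ/t| ≤ K/8 * t := by
    have heq : S + 1/4 - γ/t = (t * S + t/4 - γ)/t := by
      field_simp
    rw [heq, abs_div, abs_of_pos ht0, div_le_iff₀ ht0]
    calc |t * S + t/4 - γ| ≤ K * t^2/8 := hsum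
      _ = K/8 * t * t := by ring
  have hlog' : |L/t - (-Real.log t/t + 1/2)| ≤ 3 * t := by
    have heq : L/t - (-Real.log t/t + 1/2) = (L - (-Real.log t + t/2))/t := by
      field_simp
    rw [heq, abs_div, abs_of_pos ht0, div_le_iff₀ ht0]
    calc |L - (-Real.log t + t/2)| ≤ 3 * t^2 := hlog
      _ = 3 * t * t := by ring
  rw [Real.norm_eq_abs, Real.norm_eq_abs, abs_of_pos ht0]
  have hD : Theta t - (-Real.log t / t + γ / t + 1/4)
      = (S + 1/4 - γ/t) + (L/t - (-Real.log t/t + 1/2)) := by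
    rw [hsplit]
    ring
  rw [hD]
  calc |(S + 1/4 - γ/t) + (L/t - (-Real.log t/t + 1/2))|
      ≤ |S + 1/4 - γ/t| + |L/t - (-Real.log t/t + 1/2)| := abs_add_le _ _
    _ ≤ K/8 * t + 3 * t := add_le_add hsum' hlog'
    _ = (K/8 + 3) * t := by ring
end

section
/- (Abelian/Tauberian asymptotic for Laplace transforms) Let f be an L-function with f(t) ~ B t^β L(t) as t → 0⁺, where β > -1, B ∈ ℂ, and L is slowly varying at 0 (L(ut)/L(t) → 1 as t → 0 for every u > 0). Then the Laplace transform f̃ satisfies f̃(s) ~ B Γ(β+1) s^{-(β+1)} L(1/s) as s → ∞ along the positive reals. -/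
open MeasureTheory Filter

/-- An `L`-function (complex-valued) in the sense of Doetsch. -/
structure IsLFunctionC (f : ℝ → ℂ) : Prop where
  loc : ∀ T₁ T₂ : ℝ, 0 < T₁ → T₁ ≤ T₂ → IntervalIntegrable f volume T₁ T₂
  int_zero : ∃ T > (0 : ℝ), IntegrableOn f (Set.Ioc 0 T) volume
  int_top : ∃ s₀ : ℝ, ∃ T > (0 : ℝ),
      IntegrableOn (fun t => f t * Real.exp (-s₀ * t)) (Set.Ioi T) volume

/-- `L` is slowly varying at `0⁺`: `L(ut)/L(t) → 1` as `t → 0⁺` for every `u > 0`. -/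
def SlowlyVaryingAtZero (L : ℝ → ℝ) : Prop :=
  ∀ u : ℝ, 0 < u →
    Tendsto (fun t => L (u * t) / L t) (nhdsWithin 0 (Set.Ioi 0)) (nhds 1)

/-- The Laplace transform `f̃(s) = ∫_0^∞ e^{-st} f(t) dt`. -/
noncomputable def laplace (f : ℝ → ℂ) (s : ℝ) : ℂ :=
  ∫ t in Set.Ioi (0 : ℝ), Real.exp (-s * t) * f t

section Helpers

open Set Real

lemma measure_bad_tendsto (h : ℝ → ℝ) (hc : Continuous h)
    (hshift : ∀ c : ℝ, Tendsto (fun x => h (x + c) - h x) atTop (nhds 0))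
    {ε : ℝ} (hε : 0 < ε) (l r : ℝ) :
    Tendsto (fun x => volume (Icc l r ∩ {u : ℝ | ε < |h (x + u) - h x|}))
      atTop (nhds 0) := by
  have hopen : ∀ x : ℝ, IsOpen {u : ℝ | ε < |h (x + u) - h x|} := by
    intro x
    have : Continuous fun u : ℝ => |h (x + u) - h x| := by fun_prop
    exact isOpen_lt continuous_const this
  set G : ℝ → ℝ → ℝ := fun x u =>
    Set.indicator {u : ℝ | ε < |h (x + u) - h x|} (fun _ => (1:ℝ)) u with hG
  have key : Tendsto (fun x => ∫ u in Icc l r, G x u) atTop (nhds 0) := by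
    have h0 : (0:ℝ) = ∫ u in Icc l r, (0:ℝ) := by simp
    rw [h0]
    apply tendsto_integral_filter_of_dominated_convergence (fun _ => (1:ℝ))
    · filter_upwards with x
      exact (Measurable.indicator measurable_const (hopen x).measurableSet).aestronglyMeasurable
    · filter_upwards with x
      filter_upwards with u
      rw [hG]
      by_cases hu : u ∈ {u : ℝ | ε < |h (x + u) - h x|} <;>
        simp [Set.indicator_apply, hu]
    · exact integrableOn_const (by simp [Real.volume_Icc])
    · filter_upwards with u
      have hev : ∀ᶠ x in atTop, G x u = 0 := by
        have : ∀ᶠ x in atTop, |h (x + u) - h x| < ε := by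
          have := (hshift u).eventually (eventually_abs_sub_lt 0 hε)
          simpa using this
        filter_upwards [this] with x hx
        simp [hG, Set.indicator_apply, not_lt.2 hx.le]
      exact Tendsto.congr' (hev.mono fun x hx => hx.symm) tendsto_const_nhds
  have heq : ∀ x : ℝ, (∫ u in Icc l r, G x u)
      = (volume (Icc l r ∩ {u : ℝ | ε < |h (x + u) - h x|})).toReal := by
    intro x
    rw [hG]
    rw [MeasureTheory.setIntegral_indicator (hopen x).measurableSet]
    simp
    rfl
  have key' : Tendsto
      (fun x => (volume (Icc l r ∩ {u : ℝ | ε < |h (x + u) - h x|})).toReal) atTop (nhds 0) := by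
    refine key.congr fun x => heq x
  have hfin : ∀ x : ℝ, volume (Icc l r ∩ {u : ℝ | ε < |h (x + u) - h x|}) ≠ ⊤ := by
    intro x
    exact ne_top_of_le_ne_top (by simp [Real.volume_Icc])
      (measure_mono inter_subset_left)
  have := ENNReal.tendsto_ofReal key'
  rw [ENNReal.ofReal_zero] at this
  refine this.congr fun x => ?_
  exact ENNReal.ofReal_toReal (hfin x)

lemma uct (h : ℝ → ℝ) (hc : Continuous h)
    (hshift : ∀ c : ℝ, Tendsto (fun x => h (x + c) - h x) atTop (nhds 0))
    {ε : ℝ} (hε : 0 < ε) :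
    ∀ᶠ x in atTop, ∀ c ∈ Icc (0:ℝ) 1, |h (x + c) - h x| ≤ ε := by
  have h2 : 0 < ε / 2 := by positivity
  have e1 : ∀ᶠ x in atTop,
      volume (Icc (0:ℝ) 3 ∩ {u | ε/2 < |h (x+u) - h x|}) < ENNReal.ofReal 1 :=
    (measure_bad_tendsto h hc hshift h2 0 3).eventually_lt_const (by simp)
  have e2 : ∀ᶠ x in atTop,
      volume (Icc (-1:ℝ) 3 ∩ {u | ε/2 < |h (x+u) - h x|}) < ENNReal.ofReal 1 :=
    (measure_bad_tendsto h hc hshift h2 (-1) 3).eventually_lt_const (by simp)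
  obtain ⟨X1, hX1⟩ := eventually_atTop.1 e1
  obtain ⟨X2, hX2⟩ := eventually_atTop.1 e2
  filter_upwards [eventually_ge_atTop X1, eventually_ge_atTop X2] with x hx1 hx2
  intro c hc01
  obtain ⟨hc0, hc1⟩ := hc01
  set bad1 : Set ℝ := Icc (0:ℝ) 3 ∩ {u | ε/2 < |h (x+u) - h x|} with hbad1
  set bad2 : Set ℝ := Icc (-1:ℝ) 3 ∩ {v | ε/2 < |h ((x+c)+v) - h (x+c)|} with hbad2
  set badt : Set ℝ := (fun u : ℝ => u + (-c)) ⁻¹' bad2 with hbadt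
  have hb1 : volume bad1 < ENNReal.ofReal 1 := hX1 x hx1
  have hb2 : volume badt < ENNReal.ofReal 1 := by
    rw [hbadt, measure_preimage_add_right]
    exact hX2 (x+c) (by linarith)
  have hexists : ∃ u ∈ Icc (0:ℝ) 3, u ∉ bad1 ∧ u ∉ badt := by
    by_contra hcov
    push_neg at hcov
    have hsub : Icc (0:ℝ) 3 ⊆ bad1 ∪ badt := by
      intro u hu
      by_cases hb : u ∈ bad1
      · exact Or.inl hb
      · exact Or.inr (hcov u hu hb)
    have h3 : ENNReal.ofReal 3 ≤ volume (bad1 ∪ badt) := by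
      have := measure_mono hsub (μ := volume)
      simpa [Real.volume_Icc] using this
    have h4 : volume (bad1 ∪ badt) < ENNReal.ofReal 3 := by
      calc volume (bad1 ∪ badt) ≤ volume bad1 + volume badt := measure_union_le _ _
      _ < ENNReal.ofReal 1 + ENNReal.ofReal 1 := ENNReal.add_lt_add hb1 hb2
      _ = ENNReal.ofReal 2 := by rw [← ENNReal.ofReal_add] <;> norm_num
      _ < ENNReal.ofReal 3 := by rw [ENNReal.ofReal_lt_ofReal_iff] <;> norm_num
    exact absurd (lt_of_le_of_lt h3 h4) (lt_irrefl _)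
  obtain ⟨u, hu03, hu1, hu2⟩ := hexists
  have k1 : |h (x + u) - h x| ≤ ε/2 := by
    by_contra hk
    exact hu1 ⟨hu03, by simpa using lt_of_not_ge hk⟩
  have k2 : |h ((x+c) + (u - c)) - h (x+c)| ≤ ε/2 := by
    by_contra hk
    refine hu2 ?_
    rw [hbadt]
    refine ⟨⟨by simp; linarith [hu03.1], by simp; linarith [hu03.2]⟩, ?_⟩
    simpa [sub_eq_add_neg] using lt_of_not_ge hk
  have heq : (x+c) + (u - c) = x + u := by ring
  rw [heq] at k2
  calc |h (x + c) - h x| = |(h (x+u) - h x) - (h (x+u) - h (x+c))| := by ring_nf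
    _ ≤ |h (x+u) - h x| + |h (x+u) - h (x+c)| := abs_sub _ _
    _ ≤ ε/2 + ε/2 := add_le_add k1 (abs_sub_comm (h (x+u)) (h (x+c)) ▸ k2)
    _ = ε := by ring

lemma chain (h : ℝ → ℝ) (hc : Continuous h)
    (hshift : ∀ c : ℝ, Tendsto (fun x => h (x + c) - h x) atTop (nhds 0))
    {ε : ℝ} (hε : 0 < ε) :
    ∃ X : ℝ, 0 ≤ X ∧ ∀ x ≥ X, ∀ y ≥ X, |h y - h x| ≤ ε * (|y - x| + 1) := by
  obtain ⟨X0, hX⟩ := eventually_atTop.1 (uct h hc hshift hε)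
  set X := max X0 0 with hXdef
  have hX' : ∀ x ≥ X, ∀ c ∈ Icc (0:ℝ) 1, |h (x + c) - h x| ≤ ε :=
    fun x hx => hX x (le_trans (le_max_left _ _) hx)
  refine ⟨X, le_max_right _ _, ?_⟩
  have step : ∀ n : ℕ, ∀ x ≥ X, ∀ c : ℝ, (n:ℝ) ≤ c → c ≤ (n:ℝ) + 1 →
      |h (x + c) - h x| ≤ ε * ((n:ℝ) + 1) := by
    intro n
    induction n with
    | zero =>
      intro x hx c h0 h1
      simpa using hX' x hx c ⟨by simpa using h0, by simpa using h1⟩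
    | succ n ih =>
      intro x hx c h0 h1
      have hx1 : x + 1 ≥ X := by linarith
      have i1 : |h ((x+1) + (c-1)) - h (x+1)| ≤ ε * ((n:ℝ)+1) := by
        refine ih (x+1) hx1 (c-1) ?_ ?_ <;> push_cast at h0 h1 ⊢ <;> linarith
      have i2 : |h (x + 1) - h x| ≤ ε := by
        simpa using hX' x hx 1 ⟨zero_le_one, le_refl _⟩
      have heq : (x+1) + (c-1) = x + c := by ring
      rw [heq] at i1
      calc |h (x + c) - h x| = |(h (x+c) - h (x+1)) + (h (x+1) - h x)| := by ring_nf
        _ ≤ |h (x+c) - h (x+1)| + |h (x+1) - h x| := abs_add_le _ _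
        _ ≤ ε * ((n:ℝ)+1) + ε := add_le_add i1 i2
        _ = ε * (((n:ℕ)+1:ℕ):ℝ) + ε * 1 - ε + ε := by push_cast; ring
        _ ≤ ε * ((((n:ℕ)+1:ℕ):ℝ) + 1) := by push_cast; nlinarith
  have main : ∀ x ≥ X, ∀ c : ℝ, 0 ≤ c → |h (x + c) - h x| ≤ ε * (c + 1) := by
    intro x hx c hc0
    have h1 : ((⌊c⌋₊:ℝ)) ≤ c := Nat.floor_le hc0
    have h2 : c ≤ (⌊c⌋₊:ℝ) + 1 := (Nat.lt_floor_add_one c).le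
    calc |h (x + c) - h x| ≤ ε * ((⌊c⌋₊:ℝ) + 1) := step ⌊c⌋₊ x hx c h1 h2
      _ ≤ ε * (c + 1) := by nlinarith
  intro x hx y hy
  rcases le_total x y with hxy | hxy
  · have := main x hx (y - x) (by linarith)
    rw [add_sub_cancel] at this
    simpa [abs_of_nonneg (by linarith : (0:ℝ) ≤ y - x)] using this
  · have := main y hy (x - y) (by linarith)
    rw [add_sub_cancel] at this
    rw [abs_sub_comm]
    simpa [abs_of_nonpos (by linarith : y - x ≤ 0)] using this

lemma exp_abs_eq_max {a : ℝ} : Real.exp |a| = max (Real.exp a) (Real.exp (-a)) := by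
  rw [abs_eq_max_neg]
  exact Real.exp_monotone.map_max

lemma potter (L : ℝ → ℝ) (hLpos : ∀ t : ℝ, 0 < t → 0 < L t)
    (hLcont : ContinuousOn L (Set.Ioi 0)) (hslow : SlowlyVaryingAtZero L)
    {η : ℝ} (hη : 0 < η) :
    ∃ t₀ : ℝ, 0 < t₀ ∧ t₀ ≤ 1 ∧ ∀ t t', 0 < t → t ≤ t₀ → 0 < t' → t' ≤ t₀ →
      L t' ≤ Real.exp η * max ((t'/t) ^ η) ((t'/t) ^ (-η)) * L t := by
  set h : ℝ → ℝ := fun x => Real.log (L (Real.exp (-x))) with hdef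
  have hc : Continuous h := by
    rw [continuous_iff_continuousAt]
    intro x
    have h1 : ContinuousAt (fun x : ℝ => Real.exp (-x)) x := by fun_prop
    have h2 : ContinuousAt L (Real.exp (-x)) :=
      hLcont.continuousAt (isOpen_Ioi.mem_nhds (exp_pos _))
    have h3 : ContinuousAt Real.log (L (Real.exp (-x))) :=
      Real.continuousAt_log (hLpos _ (exp_pos _)).ne'
    have h21 : ContinuousAt (fun y : ℝ => L (Real.exp (-y))) x := ContinuousAt.comp (x := x) h2 h1
    exact ContinuousAt.comp (x := x) h3 h21
  have texp : Tendsto (fun x : ℝ => Real.exp (-x)) atTop (nhdsWithin 0 (Set.Ioi 0)) :=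
    Real.tendsto_exp_atBot_nhdsGT.comp tendsto_neg_atTop_atBot
  have hshift : ∀ c : ℝ, Tendsto (fun x => h (x + c) - h x) atTop (nhds 0) := by
    intro c
    have comp : Tendsto (fun x : ℝ => L (Real.exp (-c) * Real.exp (-x)) / L (Real.exp (-x)))
        atTop (nhds 1) := (hslow (Real.exp (-c)) (exp_pos _)).comp texp
    have lg : Tendsto (fun x : ℝ =>
        Real.log (L (Real.exp (-c) * Real.exp (-x)) / L (Real.exp (-x)))) atTop (nhds 0) := by
      have := (Real.continuousAt_log one_ne_zero).tendsto.comp comp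
      simpa [Function.comp_def] using this
    refine lg.congr fun x => ?_
    rw [Real.log_div (hLpos _ (by positivity)).ne' (hLpos _ (exp_pos _)).ne']
    rw [hdef]
    simp only []
    rw [← Real.exp_add]
    ring_nf
  obtain ⟨X, hX0, hXb⟩ := chain h hc hshift hη
  refine ⟨Real.exp (-X), exp_pos _, Real.exp_le_one_iff.2 (by linarith), ?_⟩
  intro t t' ht ht0 ht' ht'0
  have hxt : -Real.log t ≥ X := by
    have := Real.log_le_log ht ht0
    rw [Real.log_exp] at this
    linarith
  have hxt' : -Real.log t' ≥ X := by
    have := Real.log_le_log ht' ht'0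
    rw [Real.log_exp] at this
    linarith
  have hb := hXb (-Real.log t) hxt (-Real.log t') hxt'
  have e1 : h (-Real.log t) = Real.log (L t) := by rw [hdef]; simp [Real.exp_log ht]
  have e2 : h (-Real.log t') = Real.log (L t') := by rw [hdef]; simp [Real.exp_log ht']
  rw [e1, e2] at hb
  have habs : |(-Real.log t') - (-Real.log t)| = |Real.log (t'/t)| := by
    rw [Real.log_div ht'.ne' ht.ne', abs_sub_comm]
    ring_nf
  rw [habs] at hb
  have hLineq : Real.log (L t') ≤ Real.log (L t) + η * (|Real.log (t'/t)| + 1) := by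
    have := abs_le.1 hb
    linarith [this.2]
  have := Real.exp_le_exp.2 hLineq
  rw [Real.exp_log (hLpos _ ht')] at this
  refine le_trans this (le_of_eq ?_)
  rw [Real.exp_add, Real.exp_log (hLpos _ ht)]
  have hmax : Real.exp (η * (|Real.log (t'/t)| + 1))
      = Real.exp η * max ((t'/t) ^ η) ((t'/t) ^ (-η)) := by
    have hr : (0:ℝ) < t'/t := by positivity
    rw [mul_add, mul_one, Real.exp_add]
    rw [Real.rpow_def_of_pos hr, Real.rpow_def_of_pos hr]
    rw [show Real.log (t'/t) * (-η) = -(Real.log (t'/t) * η) by ring]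
    rw [← exp_abs_eq_max, abs_mul, abs_of_pos hη]
    ring_nf
  rw [hmax]
  ring

lemma one_div_tendsto_nhdsWithin :
    Tendsto (fun s : ℝ => 1 / s) atTop (nhdsWithin 0 (Set.Ioi 0)) := by
  rw [tendsto_nhdsWithin_iff]
  constructor
  · simpa [one_div] using tendsto_inv_atTop_zero
  · filter_upwards [eventually_gt_atTop (0:ℝ)] with s hs
    exact mem_Ioi.2 (by positivity)

lemma headModel_tendsto (L : ℝ → ℝ) (hLpos : ∀ t : ℝ, 0 < t → 0 < L t)
    (hLcont : ContinuousOn L (Set.Ioi 0)) (hslow : SlowlyVaryingAtZero L)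
    {β : ℝ} (hβ : -1 < β) {η : ℝ} (hη : 0 < η) (hηβ : η < β + 1)
    {C t₀ : ℝ} (hC : 0 < C) (ht₀ : 0 < t₀) (ht₀1 : t₀ ≤ 1)
    (hpot : ∀ t t', 0 < t → t ≤ t₀ → 0 < t' → t' ≤ t₀ →
      L t' ≤ C * max ((t'/t) ^ η) ((t'/t) ^ (-η)) * L t)
    {δ : ℝ} (hδ : 0 < δ) (hδt₀ : δ ≤ t₀) :
    Tendsto (fun s : ℝ => (∫ t in Ioc (0:ℝ) δ, Real.exp (-s*t) * (t ^ β * L t)) /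
      (Real.Gamma (β+1) * s ^ (-(β+1)) * L (1/s))) atTop (nhds 1) := by
  have hβ1 : (0:ℝ) < β + 1 := by linarith
  set S₀ : ℝ := max t₀⁻¹ 1 with hS₀
  have hS₀pos : 0 < S₀ := lt_of_lt_of_le one_pos (le_max_right _ _)
  set K : ℝ → ℝ := fun s => ∫ x in Ioi (0:ℝ),
    Set.indicator (Ioc 0 (δ*s)) (fun x => Real.exp (-x) * x ^ β * (L (x/s) / L (1/s))) x with hK
  -- Step 1 : K tends to Γ(β+1)
  have hGamma : Real.Gamma (β+1) = ∫ x in Ioi (0:ℝ), Real.exp (-x) * x ^ β := by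
    rw [Real.Gamma_eq_integral hβ1]
    congr 1
    ext x
    norm_num
  have hKlim : Tendsto K atTop (nhds (Real.Gamma (β+1))) := by
    rw [hGamma]
    set bound : ℝ → ℝ := fun x =>
      C * (Real.exp (-x) * x ^ (β+η) + Real.exp (-x) * x ^ (β-η)) with hbound
    apply tendsto_integral_filter_of_dominated_convergence bound
    · filter_upwards [eventually_ge_atTop S₀] with s hs
      have hs0 : 0 < s := lt_of_lt_of_le hS₀pos hs
      apply AEStronglyMeasurable.indicator _ measurableSet_Ioc
      have hcont : ContinuousOn (fun x : ℝ => Real.exp (-x) * x ^ β * (L (x/s) / L (1/s)))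
          (Ioi 0) := by
        apply ContinuousOn.mul
        · apply ContinuousOn.mul (Continuous.continuousOn (by fun_prop))
          intro x hx
          exact (Real.continuousAt_rpow_const x β (Or.inl (ne_of_gt hx))).continuousWithinAt
        · apply ContinuousOn.div_const
          have : ContinuousOn (fun x : ℝ => x / s) (Ioi 0) := by fun_prop
          apply ContinuousOn.comp hLcont this
          intro x hx
          have hx' : (0:ℝ) < x := hx
          exact mem_Ioi.2 (by positivity)
      exact hcont.aestronglyMeasurable measurableSet_Ioi
    · filter_upwards [eventually_ge_atTop S₀] with s hs
      have hs0 : 0 < s := lt_of_lt_of_le hS₀pos hs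
      have hs1 : 1/s ≤ t₀ := by
        have h1 : t₀⁻¹ ≤ s := le_trans (le_max_left _ _) hs
        calc 1/s ≤ 1/t₀⁻¹ := one_div_le_one_div_of_le (by positivity) h1
          _ = t₀ := by simp
      rw [ae_restrict_iff' measurableSet_Ioi]
      refine Eventually.of_forall fun x hx => ?_
      have hx0 : (0:ℝ) < x := hx
      by_cases hmem : x ∈ Ioc 0 (δ*s)
      · rw [Set.indicator_of_mem hmem]
        have hxs : 0 < x/s := by positivity
        have hxst₀ : x/s ≤ t₀ := by
          rw [div_le_iff₀ hs0]
          calc x ≤ δ*s := hmem.2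
            _ ≤ t₀ * s := by nlinarith
        have h1s : 0 < 1/s := by positivity
        have hp := hpot (1/s) (x/s) h1s hs1 hxs hxst₀
        have hdiv : (x/s)/(1/s) = x := by field_simp
        rw [hdiv] at hp
        have hLpos1 : 0 < L (1/s) := hLpos _ h1s
        have hratio : L (x/s) / L (1/s) ≤ C * max (x^η) (x^(-η)) := by
          rw [div_le_iff₀ hLpos1]
          linarith [hp]
        have hxβ : (0:ℝ) ≤ x ^ β := Real.rpow_nonneg hx0.le β
        have hval : ‖Real.exp (-x) * x ^ β * (L (x/s) / L (1/s))‖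
            = Real.exp (-x) * x ^ β * (L (x/s) / L (1/s)) := by
          rw [Real.norm_eq_abs, abs_of_nonneg]
          have : 0 ≤ L (x/s) / L (1/s) := (div_pos (hLpos _ hxs) hLpos1).le
          positivity
        rw [hval]
        have hmaxle : max (x^η) (x^(-η)) ≤ x^η + x^(-η) := by
          apply max_le <;>
            [linarith [Real.rpow_nonneg hx0.le (-η)]; linarith [Real.rpow_nonneg hx0.le η]]
        calc Real.exp (-x) * x ^ β * (L (x/s) / L (1/s))
            ≤ Real.exp (-x) * x ^ β * (C * max (x^η) (x^(-η))) := by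
              apply mul_le_mul_of_nonneg_left hratio (by positivity)
          _ ≤ Real.exp (-x) * x ^ β * (C * (x^η + x^(-η))) := by
              apply mul_le_mul_of_nonneg_left _ (by positivity)
              exact mul_le_mul_of_nonneg_left hmaxle hC.le
          _ = bound x := by
              simp only [hbound]
              have hxη : x ^ η ≠ 0 := (Real.rpow_pos_of_pos hx0 η).ne'
              rw [Real.rpow_add hx0 β η, Real.rpow_sub hx0 β η, Real.rpow_neg hx0.le η]
              field_simp
      · rw [Set.indicator_of_notMem hmem]
        rw [hbound, norm_zero]
        have h1 : (0:ℝ) ≤ x ^ (β+η) := Real.rpow_nonneg hx0.le _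
        have h2 : (0:ℝ) ≤ x ^ (β-η) := Real.rpow_nonneg hx0.le _
        positivity
    · have hi1 : IntegrableOn (fun x : ℝ => Real.exp (-x) * x ^ ((β+η+1)-1)) (Ioi 0) :=
        Real.GammaIntegral_convergent (by linarith)
      have hi2 : IntegrableOn (fun x : ℝ => Real.exp (-x) * x ^ ((β-η+1)-1)) (Ioi 0) :=
        Real.GammaIntegral_convergent (by linarith)
      have e1 : (β+η+1)-1 = β+η := by ring
      have e2 : (β-η+1)-1 = β-η := by ring
      rw [e1] at hi1
      rw [e2] at hi2
      exact (hi1.add hi2).const_mul C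
    · rw [ae_restrict_iff' measurableSet_Ioi]
      refine Eventually.of_forall fun x hx => ?_
      have hx0 : (0:ℝ) < x := hx
      have hev : ∀ᶠ s in atTop, Set.indicator (Ioc 0 (δ*s))
          (fun x => Real.exp (-x) * x ^ β * (L (x/s) / L (1/s))) x
          = Real.exp (-x) * x ^ β * (L (x/s) / L (1/s)) := by
        filter_upwards [eventually_ge_atTop (x/δ)] with s hsx
        apply Set.indicator_of_mem
        refine ⟨hx0, ?_⟩
        rw [div_le_iff₀ hδ] at hsx
        nlinarith
      have hrat : Tendsto (fun s : ℝ => L (x/s) / L (1/s)) atTop (nhds 1) := by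
        have := (hslow x hx0).comp one_div_tendsto_nhdsWithin
        refine this.congr fun s => ?_
        simp only [Function.comp_apply, mul_one_div]
      have hlim : Tendsto (fun s : ℝ => Real.exp (-x) * x ^ β * (L (x/s) / L (1/s)))
          atTop (nhds (Real.exp (-x) * x ^ β)) := by
        have := (tendsto_const_nhds (x := Real.exp (-x) * x ^ β) (f := atTop)).mul hrat
        simpa using this
      exact Tendsto.congr' (hev.mono fun s h => h.symm) hlim
  -- Step 2 : the change of variables identity
  have hlink : ∀ s : ℝ, s ≥ S₀ → (∫ t in Ioc (0:ℝ) δ, Real.exp (-s*t) * (t ^ β * L t))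
      = s ^ (-(β+1)) * L (1/s) * K s := by
    intro s hs
    have hs0 : 0 < s := lt_of_lt_of_le hS₀pos hs
    set F : ℝ → ℝ := fun x => Real.exp (-x) * ((x/s) ^ β * L (x/s)) with hF
    have step1 : (∫ t in Ioc (0:ℝ) δ, Real.exp (-s*t) * (t ^ β * L t))
        = ∫ t in Ioc (0:ℝ) δ, F (s*t) := by
      apply setIntegral_congr_fun measurableSet_Ioc
      intro t ht
      rw [hF]
      simp only []
      rw [mul_comm s t, mul_div_assoc, div_self hs0.ne', mul_one, mul_comm t s, neg_mul]
    have step2 : (∫ t in Ioc (0:ℝ) δ, F (s*t)) = s⁻¹ * ∫ x in Ioc (0:ℝ) (δ*s), F x := by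
      rw [← intervalIntegral.integral_of_le hδ.le]
      rw [intervalIntegral.integral_comp_mul_left F hs0.ne']
      rw [mul_zero, smul_eq_mul]
      rw [intervalIntegral.integral_of_le (by positivity : (0:ℝ) ≤ s * δ)]
      rw [mul_comm s δ]
    have step3 : (∫ x in Ioc (0:ℝ) (δ*s), F x)
        = s ^ (-β) * ∫ x in Ioc (0:ℝ) (δ*s), Real.exp (-x) * x ^ β * L (x/s) := by
      rw [← integral_const_mul]
      apply setIntegral_congr_fun measurableSet_Ioc
      intro x hx
      have hx0 : 0 < x := hx.1
      rw [hF]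
      simp only []
      rw [Real.div_rpow hx0.le hs0.le, Real.rpow_neg hs0.le, div_eq_mul_inv]
      ring
    have step4 : K s = (L (1/s))⁻¹ * ∫ x in Ioc (0:ℝ) (δ*s), Real.exp (-x) * x ^ β * L (x/s) := by
      rw [hK]
      simp only []
      rw [setIntegral_indicator measurableSet_Ioc]
      have hss : Ioi (0:ℝ) ∩ Ioc 0 (δ*s) = Ioc 0 (δ*s) :=
        Set.inter_eq_self_of_subset_right Ioc_subset_Ioi_self
      rw [hss]
      rw [← integral_const_mul]
      apply setIntegral_congr_fun measurableSet_Ioc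
      intro x hx
      rw [div_eq_inv_mul]
      ring
    have hL1s : L (1/s) ≠ 0 := (hLpos _ (by positivity)).ne'
    rw [step1, step2, step3, step4]
    rw [show -(β+1) = -β + (-1) by ring, Real.rpow_add hs0, Real.rpow_neg_one]
    field_simp
  -- Step 3 : conclude
  have hfinal : Tendsto (fun s : ℝ => K s / Real.Gamma (β+1)) atTop (nhds 1) := by
    have := hKlim.div_const (Real.Gamma (β+1))
    rwa [div_self (Real.Gamma_pos_of_pos hβ1).ne'] at this
  refine Tendsto.congr' ?_ hfinal
  filter_upwards [eventually_ge_atTop S₀] with s hs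
  have hs0 : 0 < s := lt_of_lt_of_le hS₀pos hs
  rw [hlink s hs]
  have h1 : Real.Gamma (β+1) ≠ 0 := (Real.Gamma_pos_of_pos hβ1).ne'
  have h2 : s ^ (-(β+1)) ≠ 0 := (Real.rpow_pos_of_pos hs0 _).ne'
  have h3 : L (1/s) ≠ 0 := (hLpos _ (by positivity)).ne'
  field_simp

lemma tail_bound {f : ℝ → ℂ} {s₀ T : ℝ} (hT : 0 < T)
    (hloc : ∀ T₁ T₂ : ℝ, 0 < T₁ → T₁ ≤ T₂ → IntervalIntegrable f volume T₁ T₂)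
    (hint : IntegrableOn (fun t => f t * Real.exp (-s₀*t)) (Ioi T))
    {δ : ℝ} (hδ : 0 < δ) :
    ∃ M : ℝ, 0 ≤ M ∧ ∀ s, max s₀ 0 ≤ s →
      IntegrableOn (fun t => (Real.exp (-s*t) : ℂ) * f t) (Ioi δ) ∧
      ‖∫ t in Ioi δ, (Real.exp (-s*t) : ℂ) * f t‖ ≤ Real.exp (-(s-s₀)*δ) * M := by
  set m := max T δ with hm
  have hδm : δ ≤ m := le_max_right _ _
  have hIocInt : IntegrableOn f (Ioc δ m) := by
    rcases eq_or_lt_of_le hδm with heq | hlt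
    · rw [← heq]; simp
    · exact (intervalIntegrable_iff_integrableOn_Ioc_of_le hδm).1 (hloc δ m hδ hδm)
  have hfm : AEStronglyMeasurable f (volume.restrict (Ioi m)) := by
    have h1 : AEStronglyMeasurable (fun t => f t * Real.exp (-s₀*t))
        (volume.restrict (Ioi m)) :=
      (hint.mono_set (Ioi_subset_Ioi (le_max_left T δ))).aestronglyMeasurable
    have h2 : AEStronglyMeasurable (fun t => (Real.exp (s₀*t) : ℂ))
        (volume.restrict (Ioi m)) := by
      apply Continuous.aestronglyMeasurable
      fun_prop
    refine (h1.mul h2).congr (Eventually.of_forall fun t => ?_)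
    simp only [Pi.mul_apply]
    rw [mul_assoc, ← Complex.ofReal_mul, ← Real.exp_add]
    norm_num
  have hfδ : AEStronglyMeasurable f (volume.restrict (Ioi δ)) := by
    have : Ioi δ = Ioc δ m ∪ Ioi m := (Ioc_union_Ioi_eq_Ioi hδm).symm
    rw [this]
    exact aestronglyMeasurable_union_iff.2 ⟨hIocInt.aestronglyMeasurable, hfm⟩
  have h0 : IntegrableOn (fun t => Real.exp (-s₀*t) * ‖f t‖) (Ioi δ) := by
    have hIoi : IntegrableOn (fun t => Real.exp (-s₀*t) * ‖f t‖) (Ioi m) := by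
      have h1 := (hint.mono_set (Ioi_subset_Ioi (le_max_left T δ))).norm
      refine h1.congr (Eventually.of_forall fun t => ?_)
      simp only [norm_mul, Complex.norm_real, Real.norm_eq_abs,
        abs_of_pos (Real.exp_pos (-s₀*t))]
      ring
    have hIoc : IntegrableOn (fun t => Real.exp (-s₀*t) * ‖f t‖) (Ioc δ m) := by
      apply Integrable.mono' ((hIocInt.norm).const_mul (Real.exp (|s₀| * m)))
      · exact ((Real.continuous_exp.comp (by fun_prop)).aestronglyMeasurable).mul
          hIocInt.aestronglyMeasurable.norm
      · rw [ae_restrict_iff' measurableSet_Ioc]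
        refine Eventually.of_forall fun t ht => ?_
        have ht0 : 0 < t := lt_of_lt_of_le hδ ht.1.le
        have hexp : Real.exp (-s₀*t) ≤ Real.exp (|s₀| * m) := by
          apply Real.exp_le_exp.2
          have : -s₀ * t ≤ |s₀| * t := by
            apply mul_le_mul_of_nonneg_right _ ht0.le
            exact neg_le_abs s₀
          refine le_trans this (mul_le_mul_of_nonneg_left ht.2 (abs_nonneg _))
        rw [Real.norm_eq_abs, abs_of_nonneg (by positivity)]
        exact mul_le_mul_of_nonneg_right hexp (norm_nonneg _)
    have : Ioi δ = Ioc δ m ∪ Ioi m := (Ioc_union_Ioi_eq_Ioi hδm).symm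
    rw [this]
    exact hIoc.union hIoi
  refine ⟨∫ t in Ioi δ, Real.exp (-s₀*t) * ‖f t‖, integral_nonneg fun t => by positivity, ?_⟩
  intro s hs
  have hs₀ : s₀ ≤ s := le_trans (le_max_left s₀ 0) hs
  have hptwise : ∀ t ∈ Ioi δ, Real.exp (-s*t) * ‖f t‖
      ≤ Real.exp (-(s-s₀)*δ) * (Real.exp (-s₀*t) * ‖f t‖) := by
    intro t ht
    have ht' : δ < t := ht
    rw [← mul_assoc, ← Real.exp_add]
    apply mul_le_mul_of_nonneg_right _ (norm_nonneg _)
    apply Real.exp_le_exp.2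
    nlinarith [sub_nonneg.2 hs₀]
  have hint_s : IntegrableOn (fun t => (Real.exp (-s*t) : ℂ) * f t) (Ioi δ) := by
    apply Integrable.mono' (h0.const_mul (Real.exp (-(s-s₀)*δ)))
    · exact ((Complex.continuous_ofReal.comp (by fun_prop : Continuous fun t : ℝ =>
        Real.exp (-s*t))).aestronglyMeasurable).mul hfδ
    · rw [ae_restrict_iff' measurableSet_Ioi]
      refine Eventually.of_forall fun t ht => ?_
      simp only [norm_mul, Complex.norm_real, Real.norm_eq_abs,
        abs_of_pos (Real.exp_pos (-s*t))]
      exact hptwise t ht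
  refine ⟨hint_s, ?_⟩
  calc ‖∫ t in Ioi δ, (Real.exp (-s*t) : ℂ) * f t‖
      ≤ ∫ t in Ioi δ, ‖(Real.exp (-s*t) : ℂ) * f t‖ := norm_integral_le_integral_norm _
    _ = ∫ t in Ioi δ, Real.exp (-s*t) * ‖f t‖ := by
        apply integral_congr_ae
        refine Eventually.of_forall fun t => ?_
        simp only [norm_mul, Complex.norm_real, Real.norm_eq_abs,
          abs_of_pos (Real.exp_pos (-s*t))]
    _ ≤ ∫ t in Ioi δ, Real.exp (-(s-s₀)*δ) * (Real.exp (-s₀*t) * ‖f t‖) := by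
        apply setIntegral_mono_on _ (h0.const_mul _) measurableSet_Ioi hptwise
        · apply hint_s.norm.congr
          refine Eventually.of_forall fun t => ?_
          simp only [norm_mul, Complex.norm_real, Real.norm_eq_abs,
          abs_of_pos (Real.exp_pos (-s*t))]
    _ = Real.exp (-(s-s₀)*δ) * ∫ t in Ioi δ, Real.exp (-s₀*t) * ‖f t‖ := integral_const_mul _ _

set_option maxHeartbeats 2000000 in
/-- Abelian asymptotics of the Laplace transform (Doetsch): if `f(t) ~ B t^β L(t)` as
`t → 0⁺` with `β > -1` and `L` slowly varying at `0`, then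
`f̃(s) ~ B Γ(β+1) s^{-(β+1)} L(1/s)` as `s → ∞` along the positive reals. -/
theorem laplace_asymptotic_of_asymptotic_at_zero
    (f : ℝ → ℂ) (hL : IsLFunctionC f) (B : ℂ) (β : ℝ) (hβ : -1 < β)
    (L : ℝ → ℝ) (hLpos : ∀ t : ℝ, 0 < t → 0 < L t) (hLcont : ContinuousOn L (Set.Ioi 0))
    (hslow : SlowlyVaryingAtZero L)
    (hasymp : Tendsto (fun t => f t / ((t : ℂ) ^ (β : ℂ) * (L t : ℂ)))
        (nhdsWithin 0 (Set.Ioi 0)) (nhds B)) :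
    Tendsto (fun s : ℝ =>
        laplace f s / ((Real.Gamma (β + 1) * s ^ (-(β + 1)) * L (1 / s) : ℝ) : ℂ))
      atTop (nhds B) := by
  obtain ⟨T₀, hT₀pos, hT₀int⟩ := hL.int_zero
  obtain ⟨s₀, T, hTpos, hTint⟩ := hL.int_top
  have hβ1 : (0:ℝ) < β + 1 := by linarith
  set η : ℝ := (β+1)/2 with hηdef
  have hη : 0 < η := by positivity
  have hηβ : η < β + 1 := by rw [hηdef]; linarith
  have hβη : -1 < β - η := by rw [hηdef]; linarith
  obtain ⟨t₀, ht₀pos, ht₀1, hpot⟩ := potter L hLpos hLcont hslow hη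
  set C : ℝ := Real.exp η with hCdef
  have hCpos : 0 < C := Real.exp_pos _
  have hΓpos : 0 < Real.Gamma (β+1) := Real.Gamma_pos_of_pos hβ1
  -- polynomial lower bound for L
  set c₀ : ℝ := L t₀ / (C * t₀ ^ η) with hc₀def
  have hc₀pos : 0 < c₀ := div_pos (hLpos _ ht₀pos) (by positivity)
  have hlow : ∀ t : ℝ, 0 < t → t ≤ t₀ → c₀ * t ^ η ≤ L t := by
    intro t ht ht'
    have h1 := hpot t t₀ ht ht' ht₀pos le_rfl
    have hr1 : (1:ℝ) ≤ t₀ / t := (one_le_div ht).2 ht'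
    have hmax : max ((t₀/t) ^ η) ((t₀/t) ^ (-η)) = (t₀/t) ^ η := by
      apply max_eq_left
      exact Real.rpow_le_rpow_of_exponent_le hr1 (by linarith)
    rw [hmax] at h1
    have hd : (t₀/t) ^ η = t₀ ^ η / t ^ η := Real.div_rpow ht₀pos.le ht.le η
    rw [hd] at h1
    have htη : 0 < t ^ η := Real.rpow_pos_of_pos ht η
    have ht₀η : 0 < t₀ ^ η := Real.rpow_pos_of_pos ht₀pos η
    rw [hc₀def]
    rw [div_mul_eq_mul_div, div_le_iff₀ (by positivity)]
    calc L t₀ * t ^ η ≤ (C * (t₀ ^ η / t ^ η) * L t) * t ^ η :=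
          mul_le_mul_of_nonneg_right h1 htη.le
      _ = L t * (C * t₀ ^ η) := by field_simp
  -- reduce to metric estimate
  rw [Metric.tendsto_nhds]
  intro ε0 hε0
  set ε' : ℝ := min 1 (ε0 / (4 + ‖B‖)) with hε'def
  have hBnn : (0:ℝ) ≤ ‖B‖ := norm_nonneg B
  have hε'pos : 0 < ε' := lt_min one_pos (by positivity)
  have hε'1 : ε' ≤ 1 := min_le_left _ _
  have hε'2 : ε' ≤ ε0 / (4 + ‖B‖) := min_le_right _ _
  -- choose δ
  have hball : ∀ᶠ t in nhdsWithin 0 (Set.Ioi 0),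
      ‖f t / ((t : ℂ) ^ (β : ℂ) * (L t : ℂ)) - B‖ < ε' := by
    have := Metric.tendsto_nhds.1 hasymp ε' hε'pos
    simpa [dist_eq_norm] using this
  obtain ⟨u, hu0, husub⟩ := mem_nhdsGT_iff_exists_Ioc_subset.1 hball
  have hu0' : (0:ℝ) < u := hu0
  set δ : ℝ := min (min u t₀) T₀ with hδdef
  have hδpos : 0 < δ := lt_min (lt_min hu0' ht₀pos) hT₀pos
  have hδt₀ : δ ≤ t₀ := le_trans (min_le_left _ _) (min_le_right _ _)
  have hδu : δ ≤ u := le_trans (min_le_left _ _) (min_le_left _ _)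
  have hδT₀ : δ ≤ T₀ := min_le_right _ _
  set g : ℝ → ℝ := fun t => t ^ β * L t with hgdef
  -- pointwise closeness on (0, δ]
  have hclose : ∀ t ∈ Ioc (0:ℝ) δ, ‖f t - B * ((g t : ℝ) : ℂ)‖ ≤ ε' * g t := by
    intro t ht
    have htpos : 0 < t := ht.1
    have hgpos : 0 < g t := mul_pos (Real.rpow_pos_of_pos htpos β) (hLpos t htpos)
    have h1 : ‖f t / ((t : ℂ) ^ (β : ℂ) * (L t : ℂ)) - B‖ < ε' :=
      husub ⟨htpos, le_trans ht.2 hδu⟩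
    have hden : ((t : ℂ) ^ (β : ℂ) * (L t : ℂ)) = ((g t : ℝ) : ℂ) := by
      rw [← Complex.ofReal_cpow htpos.le, hgdef]
      push_cast
      ring
    have hdenne : ((g t : ℝ) : ℂ) ≠ 0 := Complex.ofReal_ne_zero.2 hgpos.ne'
    calc ‖f t - B * ((g t : ℝ) : ℂ)‖
        = ‖(f t / ((g t : ℝ) : ℂ) - B) * ((g t : ℝ) : ℂ)‖ := by
          rw [sub_mul, div_mul_cancel₀ _ hdenne]
      _ = ‖f t / ((g t : ℝ) : ℂ) - B‖ * g t := by
          rw [norm_mul, Complex.norm_real, Real.norm_eq_abs, abs_of_pos hgpos]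
      _ ≤ ε' * g t := by
          apply mul_le_mul_of_nonneg_right _ hgpos.le
          rw [← hden]
          exact h1.le
  -- notation
  set Dr : ℝ → ℝ := fun s => Real.Gamma (β+1) * s ^ (-(β+1)) * L (1/s) with hDrdef
  set HM : ℝ → ℝ := fun s => ∫ t in Ioc (0:ℝ) δ, Real.exp (-s*t) * g t with hHMdef
  set Tail : ℝ → ℂ := fun s => ∫ t in Ioi δ, (Real.exp (-s*t) : ℂ) * f t with hTaildef
  set Head : ℝ → ℂ := fun s => ∫ t in Ioc (0:ℝ) δ, (Real.exp (-s*t) : ℂ) * f t with hHeaddef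
  obtain ⟨M, hM0, hMb⟩ := tail_bound hTpos hL.loc hTint hδpos
  have hHMlim : Tendsto (fun s => HM s / Dr s) atTop (nhds 1) :=
    headModel_tendsto L hLpos hLcont hslow hβ hη hηβ hCpos ht₀pos ht₀1 hpot hδpos hδt₀
  -- thresholds
  set S₁ : ℝ := max (max s₀ 0) (max t₀⁻¹ 1) with hS₁def
  have hS₁1 : (1:ℝ) ≤ S₁ := le_trans (le_max_right t₀⁻¹ 1) (le_max_right _ _)
  -- tail tendsto 0
  have htail0 : Tendsto (fun s => ‖Tail s‖ / Dr s) atTop (nhds 0) := by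
    have hulim : Tendsto (fun s : ℝ =>
        (M * Real.exp (s₀*δ) / (Real.Gamma (β+1) * c₀)) *
        (s ^ (β+1+η) * Real.exp (-δ*s))) atTop (nhds 0) := by
      have h := tendsto_rpow_mul_exp_neg_mul_atTop_nhds_zero (β+1+η) δ hδpos
      have h2 := h.const_mul (M * Real.exp (s₀*δ) / (Real.Gamma (β+1) * c₀))
      simpa using h2
    apply squeeze_zero' _ _ hulim
    · filter_upwards [eventually_ge_atTop S₁] with s hsS
      have hs0 : (0:ℝ) < s := lt_of_lt_of_le one_pos (le_trans hS₁1 hsS)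
      have hDr : 0 < Dr s :=
        mul_pos (mul_pos hΓpos (Real.rpow_pos_of_pos hs0 _)) (hLpos _ (by positivity))
      positivity
    · filter_upwards [eventually_ge_atTop S₁] with s hsS
      have hs0 : (0:ℝ) < s := lt_of_lt_of_le one_pos (le_trans hS₁1 hsS)
      have hss₀ : max s₀ 0 ≤ s := le_trans (le_max_left _ _) hsS
      have hst₀ : t₀⁻¹ ≤ s := le_trans (le_max_left t₀⁻¹ 1) (le_trans (le_max_right _ _) hsS)
      have h1s : (0:ℝ) < 1/s := by positivity
      have h1st₀ : 1/s ≤ t₀ := by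
        calc 1/s ≤ 1/t₀⁻¹ := one_div_le_one_div_of_le (by positivity) hst₀
          _ = t₀ := by simp
      have hLlow : c₀ * (1/s) ^ η ≤ L (1/s) := hlow (1/s) h1s h1st₀
      set Dlow : ℝ := Real.Gamma (β+1) * s ^ (-(β+1)) * (c₀ * (1/s) ^ η) with hDlowdef
      have hDlowpos : 0 < Dlow := by
        apply mul_pos (mul_pos hΓpos (Real.rpow_pos_of_pos hs0 _))
        positivity
      have hDlowle : Dlow ≤ Dr s := by
        apply mul_le_mul_of_nonneg_left hLlow
        positivity
      have step1 : ‖Tail s‖ / Dr s ≤ (Real.exp (-(s-s₀)*δ) * M) / Dlow :=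
        div_le_div₀ (by positivity) (hMb s hss₀).2 hDlowpos hDlowle
      refine le_trans step1 (le_of_eq ?_)
      have e1 : s ^ (β+1+η) = s ^ (β+1) * s ^ η := Real.rpow_add hs0 _ _
      have e2 : s ^ (-(β+1)) = (s ^ (β+1))⁻¹ := Real.rpow_neg hs0.le _
      have e3 : (1/s) ^ η = (s ^ η)⁻¹ := by
        rw [one_div, Real.inv_rpow hs0.le]
      have e4 : Real.exp (-(s-s₀)*δ) = Real.exp (s₀*δ) * Real.exp (-δ*s) := by
        rw [← Real.exp_add]; ring_nf
      have hsβ : (0:ℝ) < s ^ (β+1) := Real.rpow_pos_of_pos hs0 _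
      have hsη : (0:ℝ) < s ^ η := Real.rpow_pos_of_pos hs0 _
      rw [hDlowdef, e1, e2, e3, e4]
      field_simp
  -- bound g on (0, δ]
  set K₁ : ℝ := C * L t₀ * t₀ ^ η with hK₁def
  have hgbound : ∀ t ∈ Ioc (0:ℝ) δ, g t ≤ K₁ * t ^ (β-η) := by
    intro t ht
    have htpos : 0 < t := ht.1
    have h1 := hpot t₀ t ht₀pos le_rfl htpos (le_trans ht.2 hδt₀)
    have hr0 : 0 < t/t₀ := by positivity
    have hr1 : t/t₀ ≤ 1 := (div_le_one ht₀pos).2 (le_trans ht.2 hδt₀)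
    have hmax : max ((t/t₀) ^ η) ((t/t₀) ^ (-η)) = (t/t₀) ^ (-η) :=
      max_eq_right (Real.rpow_le_rpow_of_exponent_ge hr0 hr1 (by linarith))
    rw [hmax] at h1
    have hd : (t/t₀) ^ (-η) = t ^ (-η) * t₀ ^ η := by
      rw [Real.div_rpow htpos.le ht₀pos.le, Real.rpow_neg ht₀pos.le]
      field_simp
    rw [hd] at h1
    have hLt : L t ≤ C * (t ^ (-η) * t₀ ^ η) * L t₀ := h1
    have htβ : (0:ℝ) ≤ t ^ β := (Real.rpow_pos_of_pos htpos β).le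
    calc g t = t ^ β * L t := rfl
      _ ≤ t ^ β * (C * (t ^ (-η) * t₀ ^ η) * L t₀) := mul_le_mul_of_nonneg_left hLt htβ
      _ = K₁ * (t ^ β * t ^ (-η)) := by rw [hK₁def]; ring
      _ = K₁ * t ^ (β-η) := by
          rw [← Real.rpow_add htpos, sub_eq_add_neg]
  -- integrability of model on (0, δ]
  have hmodelInt : ∀ s : ℝ, 0 ≤ s → IntegrableOn (fun t => Real.exp (-s*t) * g t) (Ioc 0 δ) := by
    intro s hs
    have hbint : IntegrableOn (fun t : ℝ => K₁ * t ^ (β-η)) (Ioc 0 δ) :=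
      ((intervalIntegrable_iff_integrableOn_Ioc_of_le hδpos.le).1
        (intervalIntegral.intervalIntegrable_rpow' hβη)).const_mul K₁
    apply Integrable.mono' hbint
    · have hGcont : ContinuousOn (fun t : ℝ => Real.exp (-s*t) * g t) (Ioc 0 δ) := by
        apply (Continuous.continuousOn (by fun_prop)).mul
        apply ContinuousOn.mul
        · intro t ht
          exact (Real.continuousAt_rpow_const t β (Or.inl (ne_of_gt ht.1))).continuousWithinAt
        · exact hLcont.mono fun t ht => ht.1
      exact hGcont.aestronglyMeasurable measurableSet_Ioc
    · rw [ae_restrict_iff' measurableSet_Ioc]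
      refine Eventually.of_forall fun t ht => ?_
      have htpos : 0 < t := ht.1
      have hgpos : 0 < g t := mul_pos (Real.rpow_pos_of_pos htpos β) (hLpos t htpos)
      have hexp1 : Real.exp (-s*t) ≤ 1 := Real.exp_le_one_iff.2 (by nlinarith)
      rw [Real.norm_eq_abs, abs_of_nonneg (by positivity)]
      calc Real.exp (-s*t) * g t ≤ 1 * g t := mul_le_mul_of_nonneg_right hexp1 hgpos.le
        _ = g t := one_mul _
        _ ≤ K₁ * t ^ (β-η) := hgbound t ht
  have hHMnonneg : ∀ s : ℝ, 0 ≤ HM s := by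
    intro s
    apply setIntegral_nonneg measurableSet_Ioc
    intro t ht
    have htpos : 0 < t := ht.1
    have := (hLpos t htpos).le
    have : (0:ℝ) ≤ g t := by positivity
    positivity
  -- integrability of head on (0, δ]
  have hfIoc : IntegrableOn f (Ioc 0 δ) := hT₀int.mono_set (Ioc_subset_Ioc_right hδT₀)
  have hheadInt : ∀ s : ℝ, 0 ≤ s →
      IntegrableOn (fun t => (Real.exp (-s*t) : ℂ) * f t) (Ioc 0 δ) := by
    intro s hs
    apply Integrable.mono' hfIoc.norm
    · exact ((Complex.continuous_ofReal.comp (by fun_prop : Continuous fun t : ℝ =>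
        Real.exp (-s*t))).aestronglyMeasurable).mul hfIoc.aestronglyMeasurable
    · rw [ae_restrict_iff' measurableSet_Ioc]
      refine Eventually.of_forall fun t ht => ?_
      have htpos : 0 < t := ht.1
      have hexp1 : Real.exp (-s*t) ≤ 1 := Real.exp_le_one_iff.2 (by nlinarith)
      rw [norm_mul, Complex.norm_real, Real.norm_eq_abs, abs_of_pos (Real.exp_pos _)]
      calc Real.exp (-s*t) * ‖f t‖ ≤ 1 * ‖f t‖ :=
            mul_le_mul_of_nonneg_right hexp1 (norm_nonneg _)
        _ = ‖f t‖ := one_mul _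
  -- quantitative head estimate
  have hE2 : ∀ s : ℝ, 0 ≤ s → ‖Head s - B * ((HM s : ℝ) : ℂ)‖ ≤ ε' * HM s := by
    intro s hs
    have hmodelC : IntegrableOn (fun t => ((Real.exp (-s*t) * g t : ℝ) : ℂ)) (Ioc 0 δ) :=
      (hmodelInt s hs).ofReal
    set F : ℝ → ℂ := fun t => (Real.exp (-s*t) : ℂ) * (f t - B * ((g t : ℝ) : ℂ)) with hFdef
    have hFInt : IntegrableOn F (Ioc 0 δ) := by
      have := (hheadInt s hs).sub (hmodelC.const_mul B)
      refine this.congr (Eventually.of_forall fun t => ?_)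
      simp only [hFdef, Pi.sub_apply, Complex.ofReal_mul]
      ring
    have key : Head s - B * ((HM s : ℝ) : ℂ) = ∫ t in Ioc (0:ℝ) δ, F t := by
      have hHMc : B * ((HM s : ℝ) : ℂ)
          = ∫ t in Ioc (0:ℝ) δ, B * ((Real.exp (-s*t) * g t : ℝ) : ℂ) := by
        rw [integral_const_mul]
        congr 1
        simp only [hHMdef]
        exact integral_ofReal.symm
      rw [hHeaddef, hHMc, ← integral_sub (hheadInt s hs) (hmodelC.const_mul B)]
      apply setIntegral_congr_fun measurableSet_Ioc
      intro t ht
      rw [hFdef]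
      push_cast
      ring
    rw [key]
    calc ‖∫ t in Ioc (0:ℝ) δ, F t‖ ≤ ∫ t in Ioc (0:ℝ) δ, ‖F t‖ :=
          norm_integral_le_integral_norm _
      _ ≤ ∫ t in Ioc (0:ℝ) δ, ε' * (Real.exp (-s*t) * g t) := by
          apply setIntegral_mono_on hFInt.norm ((hmodelInt s hs).const_mul ε')
            measurableSet_Ioc
          intro t ht
          have htpos : 0 < t := ht.1
          rw [hFdef]
          simp only [norm_mul, Complex.norm_real, Real.norm_eq_abs,
            abs_of_pos (Real.exp_pos (-s*t))]
          calc Real.exp (-s*t) * ‖f t - B * ((g t : ℝ) : ℂ)‖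
              ≤ Real.exp (-s*t) * (ε' * g t) :=
                mul_le_mul_of_nonneg_left (hclose t ht) (Real.exp_pos _).le
            _ = ε' * (Real.exp (-s*t) * g t) := by ring
      _ = ε' * HM s := by rw [integral_const_mul, hHMdef]
  -- final assembly
  have hHMev := Metric.tendsto_nhds.1 hHMlim ε' hε'pos
  have htailev : ∀ᶠ s in atTop, ‖Tail s‖ / Dr s < ε' :=
    htail0.eventually_lt_const hε'pos
  filter_upwards [eventually_ge_atTop S₁, hHMev, htailev] with s hsS hsHM hsT
  have hs0 : (0:ℝ) < s := lt_of_lt_of_le one_pos (le_trans hS₁1 hsS)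
  have hss₀ : max s₀ 0 ≤ s := le_trans (le_max_left _ _) hsS
  have hDr : 0 < Dr s :=
    mul_pos (mul_pos hΓpos (Real.rpow_pos_of_pos hs0 _)) (hLpos _ (by positivity))
  have hDrne : ((Dr s : ℝ) : ℂ) ≠ 0 := Complex.ofReal_ne_zero.2 hDr.ne'
  have hHMDr : |HM s / Dr s - 1| < ε' := by rwa [Real.dist_eq] at hsHM
  have hHMle2 : HM s / Dr s ≤ 2 := by
    have := (abs_lt.1 hHMDr).2
    linarith
  have hsplit : laplace f s = Head s + Tail s := by
    rw [laplace, show Ioi (0:ℝ) = Ioc 0 δ ∪ Ioi δ from (Ioc_union_Ioi_eq_Ioi hδpos.le).symm]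
    exact setIntegral_union (Ioc_disjoint_Ioi le_rfl) measurableSet_Ioi
      (hheadInt s (by linarith)) (hMb s hss₀).1
  have hgoal_eq : (Real.Gamma (β+1) * s ^ (-(β+1)) * L (1/s)) = Dr s := rfl
  rw [dist_eq_norm, hgoal_eq]
  have iden : laplace f s / ((Dr s : ℝ) : ℂ) - B
      = (Head s - B * ((HM s : ℝ) : ℂ)) / ((Dr s : ℝ) : ℂ)
        + B * (((HM s : ℝ) : ℂ) / ((Dr s : ℝ) : ℂ) - 1)
        + Tail s / ((Dr s : ℝ) : ℂ) := by
    rw [hsplit]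
    field_simp
    ring
  rw [iden]
  have n1 : ‖(Head s - B * ((HM s : ℝ) : ℂ)) / ((Dr s : ℝ) : ℂ)‖ ≤ ε' * 2 := by
    rw [norm_div, Complex.norm_real, Real.norm_eq_abs, abs_of_pos hDr]
    rw [div_le_iff₀ hDr]
    calc ‖Head s - B * ((HM s : ℝ) : ℂ)‖ ≤ ε' * HM s := hE2 s (by linarith)
      _ = ε' * (HM s / Dr s) * Dr s := by field_simp
      _ ≤ ε' * 2 * Dr s := by
          apply mul_le_mul_of_nonneg_right _ hDr.le
          exact mul_le_mul_of_nonneg_left hHMle2 hε'pos.le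
  have n2 : ‖B * (((HM s : ℝ) : ℂ) / ((Dr s : ℝ) : ℂ) - 1)‖ ≤ ‖B‖ * ε' := by
    rw [norm_mul]
    apply mul_le_mul_of_nonneg_left _ (norm_nonneg B)
    have : ((HM s : ℝ) : ℂ) / ((Dr s : ℝ) : ℂ) - 1 = ((HM s / Dr s - 1 : ℝ) : ℂ) := by
      push_cast
      ring
    rw [this, Complex.norm_real, Real.norm_eq_abs]
    exact hHMDr.le
  have n3 : ‖Tail s / ((Dr s : ℝ) : ℂ)‖ < ε' := by
    rw [norm_div, Complex.norm_real, Real.norm_eq_abs, abs_of_pos hDr]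
    exact hsT
  calc ‖(Head s - B * ((HM s : ℝ) : ℂ)) / ((Dr s : ℝ) : ℂ)
        + B * (((HM s : ℝ) : ℂ) / ((Dr s : ℝ) : ℂ) - 1)
        + Tail s / ((Dr s : ℝ) : ℂ)‖
      ≤ ‖(Head s - B * ((HM s : ℝ) : ℂ)) / ((Dr s : ℝ) : ℂ)
        + B * (((HM s : ℝ) : ℂ) / ((Dr s : ℝ) : ℂ) - 1)‖
        + ‖Tail s / ((Dr s : ℝ) : ℂ)‖ := norm_add_le _ _
    _ < (ε' * 2 + ‖B‖ * ε') + ε' := by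
        apply add_lt_add_of_le_of_lt _ n3
        exact le_trans (norm_add_le _ _) (add_le_add n1 n2)
    _ ≤ ε0 * ((3 + ‖B‖) / (4 + ‖B‖)) := by
        have h1 : ε' * 2 + ‖B‖ * ε' + ε' = (3 + ‖B‖) * ε' := by ring
        rw [h1]
        calc (3 + ‖B‖) * ε' ≤ (3 + ‖B‖) * (ε0 / (4 + ‖B‖)) :=
              mul_le_mul_of_nonneg_left hε'2 (by positivity)
          _ = ε0 * ((3 + ‖B‖) / (4 + ‖B‖)) := by ring
    _ < ε0 := by
        have : (3 + ‖B‖) / (4 + ‖B‖) < 1 := by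
          rw [div_lt_one (by positivity)]
          linarith
        nlinarith

end Helpers
end
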